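/- arXiv:2603.05300 — 9 statements merged into one kernel-verified Lean document; each statement's English description precedes it below -/
import Mathlib

section
/- For integers k ≥ 1, u ∈ ℤ, and non-negative integers s₁ ≥ s₂ ≥ ⋯ ≥ s_k ≥ 0 (with s_{k+1} := 0), the u-frame sequence, i.e. the generalised frequency sequence consisting of s_k consecutive pairs (k,0) starting at index u, followed by s_{k-1}-s_k pairs (k-1,0), ..., followed by s₁-s₂ pairs (1,0), and zeros elsewhere, has weight s₁² + ⋯ + s_k² + (u-1)(s₁ + ⋯ + s_k). -/
/-- The `u`-frame sequence associated with `s₁ ≥ ⋯ ≥ s_k ≥ 0`: at the position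
`i = u + 2t` (for `t ≥ 0`) the value is the number of `m ∈ {1,…,k}` with `t < s m`
(this places `s_k` pairs `(k,0)` first, then `s_{k-1} - s_k` pairs `(k-1,0)`, …,
then `s₁ - s₂` pairs `(1,0)`), and `0` elsewhere. -/
noncomputable def frameSeq (k : ℕ) (s : ℕ → ℕ) (u : ℤ) : ℤ → ℕ := fun i =>
  if 0 ≤ i - u ∧ (i - u) % 2 = 0 then
    ((Finset.Icc 1 k).filter fun m => (i - u)/2 < (s m : ℤ)).card
  else 0

lemma sLe (k : ℕ) (s : ℕ → ℕ) (hdec : ∀ m, 1 ≤ m → m ≤ k → s (m+1) ≤ s m) :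
    ∀ m, 1 ≤ m → m ≤ k → s m ≤ s 1 := by
  intro m
  induction m with
  | zero => omega
  | succ n ih =>
    intro h1 hk
    rcases Nat.eq_zero_or_pos n with h | h
    · subst h; exact le_rfl
    · exact le_trans (hdec n h (by omega)) (ih h (by omega))

lemma myGaussSum (u : ℤ) (n : ℕ) :
    ∑ t ∈ Finset.range n, (u + 2*(t:ℤ)) = (n:ℤ)^2 + (u-1)*n := by
  induction n with
  | zero => simp
  | succ n ih => rw [Finset.sum_range_succ, ih]; push_cast; ring

/-- The `u`-frame sequence has weight `s₁² + ⋯ + s_k² + (u-1)(s₁ + ⋯ + s_k)`. -/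
theorem stmt1 (k : ℕ) (hk : 1 ≤ k) (u : ℤ) (s : ℕ → ℕ)
    (hdec : ∀ m, 1 ≤ m → m ≤ k → s (m+1) ≤ s m) (hsk : s (k+1) = 0) :
    ∑ᶠ i : ℤ, i * (frameSeq k s u i : ℤ)
      = ∑ m ∈ Finset.Icc 1 k, ((s m : ℤ))^2
        + (u - 1) * ∑ m ∈ Finset.Icc 1 k, (s m : ℤ) := by
  classical
  set N := s 1 with hN
  have key : (Function.support fun i : ℤ => i * (frameSeq k s u i : ℤ))
      ⊆ ((Finset.range N).image (fun t : ℕ => u + 2*(t:ℤ)) : Finset ℤ) := by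
    intro i hi
    have hf : frameSeq k s u i ≠ 0 := by
      intro h
      apply hi
      simp [h]
    unfold frameSeq at hf
    split_ifs at hf with h
    · obtain ⟨h0, h2⟩ := h
      have hne : ((Finset.Icc 1 k).filter fun m => (i-u)/2 < (s m : ℤ)).Nonempty :=
        Finset.card_ne_zero.mp hf
      obtain ⟨m, hm⟩ := hne
      simp only [Finset.mem_filter, Finset.mem_Icc] at hm
      have hms : s m ≤ N := sLe k s hdec m hm.1.1 hm.1.2
      have hlt : (i-u)/2 < (N : ℤ) := lt_of_lt_of_le hm.2 (by exact_mod_cast hms)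
      have hd0 : 0 ≤ (i-u)/2 := Int.ediv_nonneg h0 (by norm_num)
      refine Finset.mem_coe.mpr (Finset.mem_image.mpr ⟨((i-u)/2).toNat, ?_, ?_⟩)
      · rw [Finset.mem_range]; omega
      · push_cast; omega
    · exact absurd rfl hf
  rw [finsum_eq_sum_of_support_subset _ key]
  rw [Finset.sum_image (by intro a _ b _ h; have h' : u + 2*(a:ℤ) = u + 2*(b:ℤ) := h; omega)]
  have hterm : ∀ t ∈ Finset.range N,
      (u + 2*(t:ℤ)) * (frameSeq k s u (u + 2*(t:ℤ)) : ℤ)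
        = ∑ m ∈ Finset.Icc 1 k,
            (if (t:ℤ) < (s m : ℤ) then (u + 2*(t:ℤ)) else 0) := by
    intro t _
    have h1 : (u + 2*(t:ℤ)) - u = 2*(t:ℤ) := by ring
    have : frameSeq k s u (u + 2*(t:ℤ))
        = ((Finset.Icc 1 k).filter fun m => (t:ℤ) < (s m : ℤ)).card := by
      unfold frameSeq
      rw [h1]
      rw [if_pos ⟨by positivity, by omega⟩]
      congr 1
      ext m
      simp only [Finset.mem_filter]
      constructor <;> rintro ⟨h, h'⟩ <;> exact ⟨h, by omega⟩
    rw [this, Finset.card_filter]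
    push_cast
    rw [Finset.mul_sum]
    refine Finset.sum_congr rfl fun m _ => ?_
    split_ifs <;> simp
  rw [Finset.sum_congr rfl hterm, Finset.sum_comm]
  have hinner : ∀ m ∈ Finset.Icc 1 k,
      ∑ t ∈ Finset.range N, (if (t:ℤ) < (s m : ℤ) then (u + 2*(t:ℤ)) else 0)
        = ((s m : ℤ))^2 + (u-1) * (s m : ℤ) := by
    intro m hm
    simp only [Finset.mem_Icc] at hm
    have hms : s m ≤ N := sLe k s hdec m hm.1 hm.2
    rw [← Finset.sum_subset (Finset.range_subset_range.mpr hms)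
      (fun t _ ht => by rw [if_neg]; simp only [Finset.mem_range, not_lt] at ht ⊢; omega)]
    rw [Finset.sum_congr rfl (fun t ht => by
      rw [if_pos]; exact_mod_cast Finset.mem_range.mp ht)]
    exact myGaussSum u (s m)
  rw [Finset.sum_congr rfl hinner, Finset.sum_add_distrib, Finset.mul_sum]
end

section
/- Let f = (f_i)_{i∈ℤ} be a generalised frequency sequence, u an integer, and h ≥ 1 with (f_u, f_{u+1}) = (h, 0) and f_i + f_{i+1} ≤ h for all i ≥ u. Let m ≥ 0 and set v := min{ t ≥ u : Σ_{i=u+2}^{t+2} (h - (f_{i-1} + f_i)) ≥ m }. Then the sequence f̄ obtained from f by applying m particle motions starting at index u satisfies: f̄_i = f_i for i < u; f̄_i = f_{i+2} for u ≤ i < v; f̄_v = f_{v+2} + Σ_{j=u+2}^{v+2}(h - (f_{j-1}+f_j)) - m; f̄_{v+1} = f_{v+1} + m - Σ_{j=u+2}^{v+1}(h - (f_{j-1}+f_j)); and f̄_i = f_i for i ≥ v+2. -/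
/-- The particle-motion process: `PPM (f, u) m (g, v)` means that starting from the
generalised frequency sequence `f` with focus at index `u`, after exactly `m` particle
motions (interleaved with the forced focus shifts) the process stops at the sequence `g`
with focus at index `v`.  With `h := f_w + f_{w+1}` the invariant sum of the focused pair:
if `f_{w+1} + f_{w+2} = h` the focus shifts to `w+1` (no motion); if `f_{w+1} + f_{w+2} < h`
the pair `(f_w, f_{w+1})` becomes `(f_w - 1, f_{w+1} + 1)` (one motion).  The process stops
immediately after the `m`-th motion (or at once if `m = 0`). -/
inductive PPM : ((ℤ → ℕ) × ℤ) → ℕ → ((ℤ → ℕ) × ℤ) → Prop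
  | zero (f : ℤ → ℕ) (w : ℤ) : PPM (f, w) 0 (f, w)
  | shift {f : ℤ → ℕ} {w : ℤ} {m : ℕ} {t : (ℤ → ℕ) × ℤ} (hm : 0 < m)
      (hcond : f (w+1) + f (w+2) = f w + f (w+1))
      (h : PPM (f, w+1) m t) : PPM (f, w) m t
  | motion {f : ℤ → ℕ} {w : ℤ} {m : ℕ} {t : (ℤ → ℕ) × ℤ}
      (hcond : f (w+1) + f (w+2) < f w + f (w+1))
      (h : PPM (Function.update (Function.update f w (f w - 1)) (w+1) (f (w+1) + 1), w) m t) :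
      PPM (f, w) (m+1) t

lemma Icc_sum_split (F : ℤ → ℕ) {a b : ℤ} (hab : a ≤ b) :
    ∑ i ∈ Finset.Icc a b, F i = F a + ∑ i ∈ Finset.Icc (a+1) b, F i := by
  have h1 : Finset.Icc a b = insert a (Finset.Icc (a+1) b) := by
    ext x; simp only [Finset.mem_Icc, Finset.mem_insert]; omega
  rw [h1, Finset.sum_insert]
  simp only [Finset.mem_Icc]; omega

lemma Icc_sum_zero (F : ℤ → ℕ) {a b : ℤ} (h : b < a) :
    ∑ i ∈ Finset.Icc a b, F i = 0 := by
  rw [Finset.Icc_eq_empty (by omega), Finset.sum_empty]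

theorem ppm_aux (h : ℕ) {s t : (ℤ → ℕ) × ℤ} {m : ℕ} (hp : PPM s m t) :
    ∀ v : ℤ, s.1 s.2 + s.1 (s.2 + 1) = h →
    (∀ i, s.2 + 1 ≤ i → s.1 i + s.1 (i + 1) ≤ h) →
    IsLeast {x : ℤ | s.2 ≤ x ∧
      m ≤ ∑ i ∈ Finset.Icc (s.2 + 2) (x + 2), (h - (s.1 (i - 1) + s.1 i))} v →
    t.2 = v ∧ (∀ i, i < s.2 → t.1 i = s.1 i) ∧
    (∀ i, s.2 ≤ i → i < v → t.1 i = s.1 (i + 2)) ∧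
    t.1 v = s.1 (v + 2) +
      ((∑ j ∈ Finset.Icc (s.2 + 2) (v + 2), (h - (s.1 (j - 1) + s.1 j))) - m) ∧
    t.1 (v + 1) = s.1 (v + 1) +
      (m - ∑ j ∈ Finset.Icc (s.2 + 2) (v + 1), (h - (s.1 (j - 1) + s.1 j))) ∧
    (∀ i, v + 2 ≤ i → t.1 i = s.1 i) := by
  induction hp with
  | zero f w =>
    intro v hA hB hv
    dsimp only at hA hB hv ⊢
    have hvw : v = w := le_antisymm (hv.2 ⟨le_refl w, Nat.zero_le _⟩) hv.1.1
    subst hvw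
    have hB1 := hB (v+1) (le_refl _)
    rw [show (v:ℤ)+1+1 = v+2 by ring] at hB1
    have hS : ∑ j ∈ Finset.Icc (v + 2) (v + 2), (h - (f (j - 1) + f j))
        = h - (f (v + 1) + f (v + 2)) := by
      rw [Icc_sum_split _ (le_refl _), Icc_sum_zero _ (by omega),
        show (v:ℤ)+2-1 = v+1 by ring, add_zero]
    refine ⟨rfl, fun i _ => rfl, fun i h1 h2 => absurd h2 (by omega), ?_, ?_, fun i _ => rfl⟩
    · simp only [hS]; omega
    · rw [Icc_sum_zero _ (by omega)]; omega
  | @shift f w m t hm hcond hrec ih =>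
    intro v hA hB hv
    dsimp only at hA hB hv ih ⊢
    simp only [show (w:ℤ)+1+1 = w+2 by ring, show (w:ℤ)+1+2 = w+3 by ring] at ih
    have hzero : h - (f (w+1) + f (w+2)) = 0 := by omega
    have hsum : ∀ b : ℤ, w + 2 ≤ b →
        ∑ i ∈ Finset.Icc (w+2) b, (h - (f (i-1) + f i))
          = ∑ i ∈ Finset.Icc (w+3) b, (h - (f (i-1) + f i)) := by
      intro b hb
      rw [Icc_sum_split _ hb, show (w:ℤ)+2+1 = w+3 by ring,
        show (w:ℤ)+2-1 = w+1 by ring, hzero, zero_add]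
    have hset : {x : ℤ | w ≤ x ∧ m ≤ ∑ i ∈ Finset.Icc (w+2) (x+2), (h - (f (i-1) + f i))}
        = {x : ℤ | w+1 ≤ x ∧ m ≤ ∑ i ∈ Finset.Icc (w+3) (x+2), (h - (f (i-1) + f i))} := by
      ext x
      simp only [Set.mem_setOf_eq]
      constructor
      · rintro ⟨hx, hm2⟩
        rcases eq_or_lt_of_le hx with heq | hlt
        · exfalso
          subst heq
          rw [Icc_sum_split _ (le_refl _), Icc_sum_zero _ (by omega),
            show (w:ℤ)+2-1 = w+1 by ring, hzero] at hm2
          omega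
        · exact ⟨by omega, by rw [← hsum (x+2) (by omega)]; exact hm2⟩
      · rintro ⟨hx, hm2⟩
        exact ⟨by omega, by rw [hsum (x+2) (by omega)]; exact hm2⟩
    have hv' : IsLeast {x : ℤ | w+1 ≤ x ∧
        m ≤ ∑ i ∈ Finset.Icc (w+3) (x+2), (h - (f (i-1) + f i))} v := by
      rw [← hset]; exact hv
    have hvw1 : w + 1 ≤ v := hv'.1.1
    obtain ⟨h1, h2, h3, h4, h5, h6⟩ := ih v (by omega) (fun i hi => hB i (by omega)) hv'
    refine ⟨h1, fun i hi => h2 i (by omega), ?_, ?_, ?_, h6⟩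
    · intro i hi1 hi2
      rcases eq_or_lt_of_le hi1 with heq | hlt
      · subst heq
        rw [h2 w (by omega)]
        omega
      · exact h3 i (by omega) hi2
    · rw [hsum (v+2) (by omega)]; exact h4
    · rw [hsum (v+1) (by omega)]; exact h5
  | @motion f w m t hcond hrec ih =>
    intro v hA hB hv
    dsimp only at hA hB hv ih ⊢
    set G := Function.update (Function.update f w (f w - 1)) (w+1) (f (w+1) + 1) with hG
    have hGw1 : G (w+1) = f (w+1) + 1 := Function.update_self _ _ _
    have hGw : G w = f w - 1 := by
      rw [hG, Function.update_of_ne (by omega), Function.update_self]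
    have hGo : ∀ i : ℤ, i ≠ w → i ≠ w+1 → G i = f i := by
      intro i hi1 hi2
      rw [hG, Function.update_of_ne hi2, Function.update_of_ne hi1]
    have hfw : 1 ≤ f w := by omega
    have hA' : G w + G (w+1) = h := by rw [hGw, hGw1]; omega
    have hB' : ∀ i, w + 1 ≤ i → G i + G (i+1) ≤ h := by
      intro i hi
      rcases eq_or_lt_of_le hi with heq | hlt
      · subst heq
        rw [show (w:ℤ)+1+1 = w+2 by ring, hGw1, hGo (w+2) (by omega) (by omega)]
        omega
      · rw [hGo i (by omega) (by omega), hGo (i+1) (by omega) (by omega)]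
        exact hB i (by omega)
    have hsum : ∀ b : ℤ, w + 2 ≤ b →
        (∑ i ∈ Finset.Icc (w+2) b, (h - (G (i-1) + G i))) + 1
          = ∑ i ∈ Finset.Icc (w+2) b, (h - (f (i-1) + f i)) := by
      intro b hb
      rw [Icc_sum_split (fun i => h - (G (i-1) + G i)) hb,
        Icc_sum_split (fun i => h - (f (i-1) + f i)) hb]
      have hcong : ∑ i ∈ Finset.Icc (w+2+1) b, (h - (G (i-1) + G i))
          = ∑ i ∈ Finset.Icc (w+2+1) b, (h - (f (i-1) + f i)) := by
        refine Finset.sum_congr rfl (fun i hi => ?_)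
        rw [Finset.mem_Icc] at hi
        rw [hGo (i-1) (by omega) (by omega), hGo i (by omega) (by omega)]
      rw [hcong, show (w:ℤ)+2-1 = w+1 by ring, hGw1, hGo (w+2) (by omega) (by omega)]
      omega
    have hset : {x : ℤ | w ≤ x ∧ m ≤ ∑ i ∈ Finset.Icc (w+2) (x+2), (h - (G (i-1) + G i))}
        = {x : ℤ | w ≤ x ∧ m+1 ≤ ∑ i ∈ Finset.Icc (w+2) (x+2), (h - (f (i-1) + f i))} := by
      ext x
      simp only [Set.mem_setOf_eq]
      constructor <;> rintro ⟨hx, hm2⟩ <;> refine ⟨hx, ?_⟩ <;>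
        have := hsum (x+2) (by omega) <;> omega
    have hv' : IsLeast {x : ℤ | w ≤ x ∧
        m ≤ ∑ i ∈ Finset.Icc (w+2) (x+2), (h - (G (i-1) + G i))} v := by
      rw [hset]; exact hv
    have hwv : w ≤ v := hv.1.1
    obtain ⟨h1, h2, h3, h4, h5, h6⟩ := ih v hA' hB' hv'
    refine ⟨h1, ?_, ?_, ?_, ?_, ?_⟩
    · intro i hi
      rw [h2 i hi]
      exact hGo i (by omega) (by omega)
    · intro i hi1 hi2
      rw [h3 i hi1 hi2]
      exact hGo (i+2) (by omega) (by omega)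
    · rw [h4, hGo (v+2) (by omega) (by omega)]
      have := hsum (v+2) (by omega)
      omega
    · rcases eq_or_lt_of_le hwv with heq | hlt
      · subst heq
        rw [h5, hGw1, Icc_sum_zero (fun i => h - (G (i-1) + G i)) (by omega),
          Icc_sum_zero (fun i => h - (f (i-1) + f i)) (by omega)]
        omega
      · rw [h5, hGo (v+1) (by omega) (by omega)]
        have := hsum (v+1) (by omega)
        omega
    · intro i hi
      rw [h6 i hi]
      exact hGo i (by omega) (by omega)

/-- Explicit description of the result of `m` particle motions (Proposition 5.4 of
[DJJ25] as restated in the paper): if `(f_u, f_{u+1}) = (h, 0)` with `h ≥ 1`,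
`f_i + f_{i+1} ≤ h` for `i ≥ u`, and `v` is the least `t ≥ u` with
`∑_{i=u+2}^{t+2} (h - (f_{i-1} + f_i)) ≥ m`, then the pair moves to position `(v, v+1)`
and the resulting sequence is given by the stated explicit formula. -/
theorem stmt2 (f : ℤ → ℕ) (hfin : (Function.support f).Finite) (u v : ℤ) (h m : ℕ)
    (hh : 1 ≤ h) (hfu : f u = h) (hfu1 : f (u+1) = 0)
    (hbd : ∀ i, u ≤ i → f i + f (i+1) ≤ h)
    (hv : IsLeast {t : ℤ | u ≤ t ∧
      m ≤ ∑ i ∈ Finset.Icc (u+2) (t+2), (h - (f (i-1) + f i))} v)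
    (fbar : ℤ → ℕ) (w : ℤ) (hppm : PPM (f, u) m (fbar, w)) :
    w = v ∧
    (∀ i, i < u → fbar i = f i) ∧
    (∀ i, u ≤ i → i < v → fbar i = f (i+2)) ∧
    fbar v = f (v+2) + ((∑ j ∈ Finset.Icc (u+2) (v+2), (h - (f (j-1) + f j))) - m) ∧
    fbar (v+1) = f (v+1) + (m - ∑ j ∈ Finset.Icc (u+2) (v+1), (h - (f (j-1) + f j))) ∧
    (∀ i, v + 2 ≤ i → fbar i = f i) := by
  exact ppm_aux h hppm v (by simp [hfu, hfu1]) (fun i hi => hbd i (by omega)) hv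
end

section
/- Let u be an even integer, and suppose a single particle-motion process ppm_u^{(m)} is applied to a generalised frequency sequence θ with (θ_u, θ_{u+1}) = (h, 0), h > 0, and θ_i + θ_{i+1} ≤ h for all i ≥ u, producing θ'. Then: every odd index i has θ_i even and m is even, if and only if every odd index i has θ'_i even. -/
/-- the odd member of {w, w+1} -/
def oo (w : ℤ) : ℤ := if Even w then w + 1 else w

lemma odd_oo (w : ℤ) : Odd (oo w) := by
  unfold oo; split <;> rename_i hw
  · exact Even.add_one hw
  · exact Int.not_even_iff_odd.mp hw

lemma key {s t : (ℤ → ℕ) × ℤ} {m : ℕ} (hp : PPM s m t) :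
    (∀ i : ℤ, Odd i → Even (t.1 i)) ↔
      ((∀ i : ℤ, Odd i → i ≠ oo s.2 → Even (s.1 i)) ∧ Even (s.1 (oo s.2) + m)) := by
  induction hp with
  | zero f w =>
    simp only
    constructor
    · intro H
      exact ⟨fun i hi _ => H i hi, by simpa using H _ (odd_oo w)⟩
    · rintro ⟨H1, H2⟩ i hi
      by_cases hc : i = oo w
      · subst hc; simpa using H2
      · exact H1 i hi hc
  | shift hm hcond h ih =>
    rename_i f w m t
    rw [ih]
    simp only
    by_cases hw : Even w
    · have hooeq : oo (w + 1) = oo w := by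
        unfold oo
        rw [if_pos hw, if_neg (by simp [Int.even_add_one, hw])]
      rw [hooeq]
    · have hwo : Odd w := Int.not_even_iff_odd.mp hw
      have hwo2 : Odd (w + 2) := by obtain ⟨k, hk⟩ := hwo; exact ⟨k + 1, by omega⟩
      have h1 : oo w = w := by unfold oo; rw [if_neg hw]
      have h2 : oo (w+1) = w + 2 := by
        unfold oo; rw [if_pos (Int.even_add_one.mpr hw)]; omega
      have heq : f (w + 2) = f w := by omega
      rw [h1, h2]
      constructor
      · rintro ⟨H1, H2⟩
        have hfw : Even (f w) := H1 w hwo (by omega)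
        refine ⟨fun i hi hc => ?_, by rwa [heq] at H2⟩
        by_cases hc2 : i = w + 2
        · subst hc2; rw [heq]; exact hfw
        · exact H1 i hi hc2
      · rintro ⟨H1, H2⟩
        have hfw2 : Even (f (w + 2)) := H1 (w + 2) hwo2 (by omega)
        refine ⟨fun i hi hc => ?_, by rwa [← heq] at H2⟩
        by_cases hc2 : i = w
        · subst hc2; rw [← heq]; exact hfw2
        · exact H1 i hi hc2
  | motion hcond h ih =>
    rename_i f w m t
    rw [ih]
    simp only
    set f' := Function.update (Function.update f w (f w - 1)) (w+1) (f (w+1) + 1) with hf'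
    have hfw : 0 < f w := by omega
    have hval : ∀ i : ℤ, i ≠ w → i ≠ w + 1 → f' i = f i := by
      intro i hi1 hi2
      rw [hf', Function.update_of_ne hi2, Function.update_of_ne hi1]
    have hvw : f' w = f w - 1 := by
      rw [hf', Function.update_of_ne (by omega), Function.update_self]
    have hvw1 : f' (w+1) = f (w+1) + 1 := by rw [hf', Function.update_self]
    have hne : ∀ i : ℤ, Odd i → i ≠ oo w → i ≠ w ∧ i ≠ w + 1 := by
      intro i hi hc
      unfold oo at hc
      by_cases hw : Even w <;> simp only [hw, if_true, if_false] at hc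
      · refine ⟨?_, hc⟩
        rintro rfl; exact (Int.not_odd_iff_even.mpr hw) hi
      · refine ⟨hc, ?_⟩
        rintro rfl
        exact (Int.not_odd_iff_even.mpr (Int.even_add_one.mpr hw)) hi
    constructor
    · rintro ⟨H1, H2⟩
      refine ⟨fun i hi hc => ?_, ?_⟩
      · obtain ⟨a, b⟩ := hne i hi hc
        rw [← hval i a b]; exact H1 i hi hc
      · unfold oo at H2 ⊢
        by_cases hw : Even w <;> simp only [hw, if_true, if_false] at H2 ⊢
        · rw [hvw1] at H2; rw [Nat.even_iff] at H2 ⊢; omega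
        · rw [hvw] at H2; rw [Nat.even_iff] at H2 ⊢; omega
    · rintro ⟨H1, H2⟩
      refine ⟨fun i hi hc => ?_, ?_⟩
      · obtain ⟨a, b⟩ := hne i hi hc
        rw [hval i a b]; exact H1 i hi hc
      · unfold oo at H2 ⊢
        by_cases hw : Even w <;> simp only [hw, if_true, if_false] at H2 ⊢
        · rw [hvw1]; rw [Nat.even_iff] at H2 ⊢; omega
        · rw [hvw]; rw [Nat.even_iff] at H2 ⊢; omega


/-- Parity preservation for particle motion at an even focus `u`: if
`(θ_u, θ_{u+1}) = (h, 0)` with `h > 0` and `θ_i + θ_{i+1} ≤ h` for `i ≥ u`, and `θ'`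
is the result of `ppm_u^{(m)}`, then: every odd index carries an even frequency in `θ`
and `m` is even, if and only if every odd index carries an even frequency in `θ'`. -/
theorem stmt4 (θ : ℤ → ℕ) (hfin : (Function.support θ).Finite) (u : ℤ) (hu : Even u)
    (h m : ℕ) (hh : 0 < h) (h0 : θ u = h) (h1 : θ (u+1) = 0)
    (hbd : ∀ i, u ≤ i → θ i + θ (i+1) ≤ h)
    (θ' : ℤ → ℕ) (v : ℤ) (hppm : PPM (θ, u) m (θ', v)) :
    ((∀ i : ℤ, Odd i → Even (θ i)) ∧ Even m) ↔ (∀ i : ℤ, Odd i → Even (θ' i)) := by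
  have K := key hppm
  simp only at K
  have hoo : oo u = u + 1 := by unfold oo; rw [if_pos hu]
  rw [hoo, h1] at K
  rw [K]
  constructor
  · rintro ⟨H1, H2⟩
    exact ⟨fun i hi _ => H1 i hi, by simpa using H2⟩
  · rintro ⟨H1, H2⟩
    refine ⟨fun i hi => ?_, by simpa using H2⟩
    by_cases hc : i = u + 1
    · subst hc; simp [h1]
    · exact H1 i hi hc
end

section
/- For non-negative integers j, r, k with j + r ≤ k, and fixed s₁ ≥ ⋯ ≥ s_k ≥ 0 (with s_{k+1}=0), the generating function for k-tuples of partitions λ = (λ⁽¹⁾,...,λ⁽ᵏ⁾), where λ⁽ᵐ⁾ has exactly s_m - s_{m+1} parts, all parts of λ⁽ᵐ⁾ are even, and each part of λ⁽ᵐ⁾ is at least m - j + max{m-(k-r), 0}, equals q^{2s_{j+1} + 2s_{j+3} + ⋯ (alternating up to index k-r) + 2s_{k-r+1} + 2s_{k-r+2} + ⋯ + 2s_k} / ((q²;q²)_{s₁-s₂} ⋯ (q²;q²)_{s_{k-1}-s_k} (q²;q²)_{s_k}), where the first group of exponents is 2s_{j+1} + 2s_{j+3} + ⋯ + 2s_{k-r-1}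 if k-r-j is even and 2s_{j+1} + 2s_{j+3} + ⋯ + 2s_{k-r} if k-r-j is odd. -/
open Finset PowerSeries

/-- `(q²;q²)_n` as a formal power series in `q = X`. -/
noncomputable def poch2 (n : ℕ) : PowerSeries ℚ :=
  ∏ i ∈ Finset.range n, (1 - (PowerSeries.X : PowerSeries ℚ) ^ (2*i + 2))

lemma geom_inv (w : ℕ) (hw : 1 ≤ w) :
    ((1 - (X : PowerSeries ℚ) ^ w))⁻¹ = PowerSeries.mk (fun n => if w ∣ n then 1 else 0) := by
  symm
  rw [PowerSeries.eq_inv_iff_mul_eq_one]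
  · ext n
    rw [mul_sub, mul_one, map_sub, PowerSeries.coeff_mul_X_pow']
    simp only [coeff_mk, coeff_one]
    rcases Nat.eq_zero_or_pos n with rfl | hn
    · have h1 : w ∣ 0 := dvd_zero w
      have h2 : ¬ w ≤ 0 := by omega
      simp [h1, h2]
    · have : ¬ n = 0 := by omega
      simp only [this, if_false]
      by_cases h : w ∣ n
      · have hwn : w ≤ n := Nat.le_of_dvd hn h
        have : w ∣ n - w := (Nat.dvd_sub h dvd_rfl)
        simp [h, hwn, this]
      · by_cases hwn : w ≤ n
        · have : ¬ w ∣ n - w := fun hd => h (by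
            have := Nat.dvd_add hd (dvd_refl w)
            rwa [Nat.sub_add_cancel hwn] at this)
          simp [h, hwn, this]
        · simp [h, hwn]
  · simp only [map_sub, map_one, map_pow, constantCoeff_X]
    rw [zero_pow (by omega)]
    norm_num

lemma prod_inv {ι : Type*} (S : Finset ι) (f : ι → PowerSeries ℚ) :
    (∏ i ∈ S, f i)⁻¹ = ∏ i ∈ S, (f i)⁻¹ := by
  classical
  induction S using Finset.induction with
  | empty => simp
  | insert a s h ih =>
    rw [Finset.prod_insert h, Finset.prod_insert h, PowerSeries.mul_inv_rev, ih, mul_comm]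



lemma coeff_prod_geom {ι : Type*} [DecidableEq ι] (A : Finset ι) (w : ι → ℕ)
    (hw : ∀ a ∈ A, 1 ≤ w a) (n : ℕ) :
    (PowerSeries.coeff (R := ℚ) n) (∏ a ∈ A, (1 - (X : PowerSeries ℚ) ^ w a)⁻¹) =
      ((A.finsuppAntidiag n).filter (fun l => ∀ a ∈ A, w a ∣ l a)).card := by
  classical
  rw [Finset.prod_congr rfl (fun a ha => geom_inv (w a) (hw a ha)), PowerSeries.coeff_prod]
  rw [Finset.card_filter]
  push_cast
  refine Finset.sum_congr rfl fun l hl => ?_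
  simp only [coeff_mk]
  by_cases h : ∀ a ∈ A, w a ∣ l a
  · rw [if_pos h, Finset.prod_congr rfl (fun a ha => if_pos (h a ha)), Finset.prod_const_one]
  · rw [if_neg h]
    obtain ⟨a, ha, hna⟩ := by push_neg at h; exact h
    exact Finset.prod_eq_zero ha (if_neg hna)


/-- smallest even number `≥ max(c,0)` where `c = m - j + max(m-(k-r),0)`. -/
def eN (j r k m : ℕ) : ℕ := (m - j) + (m - (k - r)) + ((m - j) + (m - (k - r))) % 2

lemma eN_even (j r k m : ℕ) : Even (eN j r k m) := by
  rw [Nat.even_iff]; unfold eN; omega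

lemma keyEven (j r k : ℕ) (hrk : r ≤ k) (hj : j ≤ k - r) (m v : ℕ) (hv : Even v) :
    ((m:ℤ) - j + max ((m:ℤ) - ((k:ℤ) - r)) 0 ≤ (v:ℤ)) ↔ eN j r k m ≤ v := by
  obtain ⟨u, rfl⟩ := hv
  unfold eN
  have h1 : ((m:ℤ) - ((k:ℤ) - r)) = (m:ℤ) - ((k-r:ℕ):ℤ) := by omega
  rw [h1]
  rcases le_total ((m:ℤ) - ((k-r:ℕ):ℤ)) 0 with h | h
  · rw [max_eq_right h]; omega
  · rw [max_eq_left h]; omega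

lemma anti_le (y : ℕ → ℕ) (p : ℕ) : ∀ n, p ≤ n → (∀ i, p ≤ i → i < n → y (i+1) ≤ y i) →
    y n ≤ y p := by
  intro n
  induction n with
  | zero => intro h _; simp_all
  | succ n ih =>
    intro hpn h
    rcases Nat.eq_or_lt_of_le hpn with he | hl
    · rw [he]
    · have hpn' : p ≤ n := by omega
      exact le_trans (h n hpn' (by omega)) (ih hpn' (fun i h1 h2 => h i h1 (by omega)))

lemma telescope1 (y : ℕ → ℕ) : ∀ n : ℕ, (∀ i, i < n → y (i+1) ≤ y i) →
    (∑ i ∈ range n, (i+1) * (y i - y (i+1))) + n * y n = ∑ i ∈ range n, y i := by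
  intro n
  induction n with
  | zero => simp
  | succ n ih =>
    intro h
    rw [Finset.sum_range_succ, Finset.sum_range_succ]
    have H := ih (fun i hi => h i (by omega))
    have h1 : y (n+1) ≤ y n := h n (by omega)
    have h2 : (n+1) * (y n - y (n+1)) = (n+1) * y n - (n+1) * y (n+1) := by
      rw [Nat.mul_sub]
    have h3 : (n+1) * y (n+1) ≤ (n+1) * y n := Nat.mul_le_mul_left _ h1
    have h4 : (n+1) * y n = n * y n + y n := by ring
    have h5 : (n+1) * y (n+1) = n * y (n+1) + y (n+1) := by ring
    omega

lemma tele2 (y : ℕ → ℕ) (p : ℕ) : ∀ n : ℕ, p ≤ n → (∀ i, p ≤ i → i < n → y (i+1) ≤ y i) →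
    (∀ i, p ≤ i → i ≤ n → Even (y i)) →
    2 * ∑ i ∈ Ico p n, ((y i - y (i+1)) / 2) = y p - y n := by
  intro n
  induction n with
  | zero =>
    intro hpn _ _
    have : p = 0 := by omega
    simp [this]
  | succ n ih =>
    intro hpn h hev
    rcases Nat.eq_or_lt_of_le hpn with he | hl
    · rw [← he]; simp
    · have hpn' : p ≤ n := by omega
      rw [Finset.sum_Ico_succ_top hpn', Nat.mul_add]
      rw [ih hpn' (fun i h1 h2 => h i h1 (by omega)) (fun i h1 h2 => hev i h1 (by omega))]
      have h1 : y (n+1) ≤ y n := h n hpn' (by omega)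
      have h2 : y n ≤ y p := anti_le y p n hpn' (fun i hi1 hi2 => h i hi1 (by omega))
      have he1 : Even (y n) := hev n hpn' (by omega)
      have he2 : Even (y (n+1)) := hev (n+1) (by omega) (by omega)
      obtain ⟨a, ha⟩ := he1
      obtain ⟨b, hb⟩ := he2
      omega

lemma swap_sum (g : ℕ → ℕ) : ∀ n : ℕ,
    ∑ p ∈ range n, ∑ i ∈ Ico p n, g i = ∑ i ∈ range n, (i+1) * g i := by
  intro n
  induction n with
  | zero => simp
  | succ n ih =>
    rw [Finset.sum_range_succ, Finset.sum_range_succ, ← ih]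
    have : ∀ p ∈ range n, ∑ i ∈ Ico p (n+1), g i = (∑ i ∈ Ico p n, g i) + g n := by
      intro p hp
      rw [Finset.sum_Ico_succ_top (by simp at hp; omega)]
    rw [Finset.sum_congr rfl this, Finset.sum_add_distrib]
    simp [Nat.Ico_succ_singleton]
    ring

lemma abel (f g : ℕ → ℕ) : ∀ K : ℕ, (∀ m, 1 ≤ m → m ≤ K → f (m+1) ≤ f m) →
    (∀ m, m < K → g m ≤ g (m+1)) →
    ∑ t ∈ Icc 1 K, (f t - f (t+1)) * g t + f (K+1) * g K
      = ∑ t ∈ Icc 1 K, f t * (g t - g (t-1)) + f 1 * g 0 := by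
  intro K
  induction K with
  | zero => simp
  | succ K ih =>
    intro hf hg
    rw [Finset.sum_Icc_succ_top (by omega), Finset.sum_Icc_succ_top (by omega)]
    have H := ih (fun m h1 h2 => hf m h1 (by omega)) (fun m hm => hg m (by omega))
    have h1 : f (K+1+1) ≤ f (K+1) := hf (K+1) (by omega) (by omega)
    have h2 : g K ≤ g (K+1) := hg K (by omega)
    have e1 : (f (K+1) - f (K+1+1)) * g (K+1) = f (K+1) * g (K+1) - f (K+1+1) * g (K+1) := by
      rw [Nat.sub_mul]
    have e2 : f (K+1) * (g (K+1) - g ((K+1)-1)) = f (K+1) * g (K+1) - f (K+1) * g K := by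
      rw [Nat.mul_sub]; norm_num
    have i1 : f (K+1+1) * g (K+1) ≤ f (K+1) * g (K+1) := Nat.mul_le_mul_right _ h1
    have i2 : f (K+1) * g K ≤ f (K+1) * g (K+1) := Nat.mul_le_mul_left _ h2
    omega

lemma exponent_eq (j r k : ℕ) (hjr : j + r ≤ k) (s : ℕ → ℕ)
    (hdec : ∀ m, 1 ≤ m → m ≤ k → s (m+1) ≤ s m) (hsk : s (k+1) = 0) :
    2 * ∑ t ∈ (Icc (j+1) (k-r)).filter (fun t => Odd (t - j)), s t
      + 2 * ∑ t ∈ Icc (k-r+1) k, s t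
    = ∑ t ∈ Icc 1 k, (s t - s (t+1)) * eN j r k t := by
  classical
  have hg : ∀ m, m < k → eN j r k m ≤ eN j r k (m+1) := by
    intro m hm; unfold eN; omega
  have habel := abel s (eN j r k) k hdec hg
  have hg0 : eN j r k 0 = 0 := by unfold eN; omega
  rw [hsk, hg0, Nat.zero_mul, Nat.mul_zero, Nat.add_zero, Nat.add_zero] at habel
  rw [habel]
  have hpt : ∀ t ∈ Icc 1 k, s t * (eN j r k t - eN j r k (t-1)) =
      (if j+1 ≤ t ∧ t ≤ k - r ∧ (t - j) % 2 = 1 then 2 * s t else 0)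
      + (if k - r + 1 ≤ t then 2 * s t else 0) := by
    intro t ht
    simp only [mem_Icc] at ht
    have hd : eN j r k t - eN j r k (t-1) =
        (if j+1 ≤ t ∧ t ≤ k - r ∧ (t - j) % 2 = 1 then 2 else 0)
        + (if k - r + 1 ≤ t then 2 else 0) := by
      unfold eN; split_ifs <;> omega
    rw [hd]; split_ifs <;> ring
  rw [Finset.sum_congr rfl hpt, Finset.sum_add_distrib]
  congr 1
  · rw [← Finset.sum_filter, Finset.mul_sum]
    have : (Icc 1 k).filter (fun t => j+1 ≤ t ∧ t ≤ k - r ∧ (t - j) % 2 = 1)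
        = (Icc (j+1) (k-r)).filter (fun t => Odd (t - j)) := by
      ext a
      simp only [Finset.mem_filter, Finset.mem_Icc, Nat.odd_iff]
      omega
    rw [this]
  · rw [← Finset.sum_filter, Finset.mul_sum]
    have : (Icc 1 k).filter (fun t => k - r + 1 ≤ t) = Icc (k-r+1) k := by
      ext a
      simp only [Finset.mem_filter, Finset.mem_Icc]
      omega
    rw [this]


/-- forward map: difference data of a tuple of partitions -/
def Ffun (k : ℕ) (N e : ℕ → ℕ) (lam : ℕ → ℕ → ℕ) : (Σ _ : ℕ, ℕ) → ℕ :=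
  fun a => if a.1 ∈ Icc 1 k ∧ a.2 < N a.1
    then (a.2+1) * (lam a.1 a.2 - (if a.2+1 < N a.1 then lam a.1 (a.2+1) else e a.1)) else 0

/-- backward map: rebuild a tuple of partitions from difference data -/
def Gfun (k : ℕ) (N e : ℕ → ℕ) (l : (Σ _ : ℕ, ℕ) →₀ ℕ) : ℕ → ℕ → ℕ :=
  fun t p => if t ∈ Icc 1 k ∧ p < N t
    then e t + 2 * ∑ i ∈ Ico p (N t), l ⟨t, i⟩ / (2*i+2) else 0

set_option maxHeartbeats 2000000 in
lemma key_card (k : ℕ) (N e : ℕ → ℕ) (c : ℕ → ℤ) (he : ∀ m, Even (e m))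
    (hce : ∀ m (v : ℕ), Even v → (c m ≤ (v:ℤ) ↔ e m ≤ v)) (n : ℕ) :
    Nat.card {lam : ℕ → ℕ → ℕ //
      (∀ m ∈ Finset.Icc 1 k, ∀ p, p + 1 < N m → lam m (p+1) ≤ lam m p) ∧
      (∀ m ∈ Finset.Icc 1 k, ∀ p, p < N m → Even (lam m p) ∧ c m ≤ (lam m p : ℤ)) ∧
      (∀ m p, (m ∉ Finset.Icc 1 k ∨ N m ≤ p) → lam m p = 0) ∧
      (∑ m ∈ Finset.Icc 1 k, ∑ p ∈ Finset.range (N m), lam m p) = n} =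
    if (∑ t ∈ Finset.Icc 1 k, N t * e t) ≤ n then
      ((((Finset.Icc 1 k).sigma fun t => Finset.range (N t)).finsuppAntidiag
          (n - ∑ t ∈ Finset.Icc 1 k, N t * e t)).filter
        (fun l => ∀ a ∈ ((Finset.Icc 1 k).sigma fun t => Finset.range (N t)),
            (2*a.2+2) ∣ l a)).card
    else 0 := by
  classical
  set E := ∑ t ∈ Icc 1 k, N t * e t with hE
  set A := (Icc 1 k).sigma (fun t => range (N t)) with hA
  -- support of Ffun
  have hsupp : ∀ lam : ℕ → ℕ → ℕ, ∀ a, Ffun k N e lam a ≠ 0 → a ∈ A := by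
    intro lam a ha
    simp only [Ffun] at ha
    by_cases hc : a.1 ∈ Icc 1 k ∧ a.2 < N a.1
    · rw [hA, Finset.mem_sigma]
      exact ⟨hc.1, Finset.mem_range.mpr hc.2⟩
    · rw [if_neg hc] at ha; exact absurd rfl ha
  -- per-block sum fact
  have SF : ∀ (lam : ℕ → ℕ → ℕ),
      (∀ m ∈ Icc 1 k, ∀ p, p + 1 < N m → lam m (p+1) ≤ lam m p) →
      (∀ m ∈ Icc 1 k, ∀ p, p < N m → Even (lam m p) ∧ c m ≤ (lam m p : ℤ)) →
      ∀ t ∈ Icc 1 k, (∑ i ∈ range (N t), Ffun k N e lam ⟨t,i⟩) + N t * e t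
        = ∑ i ∈ range (N t), lam t i := by
    intro lam h1 h2 t ht
    have hlb : ∀ p, p < N t → e t ≤ lam t p := fun p hp =>
      (hce t (lam t p) (h2 t ht p hp).1).mp (h2 t ht p hp).2
    have hy : ∀ i, i < N t →
        (fun i => if i < N t then lam t i else e t) (i+1) ≤
        (fun i => if i < N t then lam t i else e t) i := by
      intro i hi
      dsimp only
      rw [if_pos hi]
      by_cases h : i+1 < N t
      · rw [if_pos h]; exact h1 t ht i h
      · rw [if_neg h]; exact hlb i hi
    have htel := telescope1 (fun i => if i < N t then lam t i else e t) (N t) hy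
    rw [if_neg (lt_irrefl (N t))] at htel
    have e1 : ∀ i ∈ range (N t),
        (i+1) * ((if i < N t then lam t i else e t) -
          (if i+1 < N t then lam t (i+1) else e t)) = Ffun k N e lam ⟨t,i⟩ := by
      intro i hi
      rw [Finset.mem_range] at hi
      simp only [Ffun]
      rw [if_pos (⟨ht, hi⟩ : t ∈ Icc 1 k ∧ i < N t), if_pos hi]
    have e2 : ∀ i ∈ range (N t), (if i < N t then lam t i else e t) = lam t i := by
      intro i hi; rw [Finset.mem_range] at hi; exact if_pos hi
    rw [Finset.sum_congr rfl e1, Finset.sum_congr rfl e2] at htel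
    exact htel
  -- total sum fact
  have TOT : ∀ (lam : ℕ → ℕ → ℕ),
      (∀ m ∈ Icc 1 k, ∀ p, p + 1 < N m → lam m (p+1) ≤ lam m p) →
      (∀ m ∈ Icc 1 k, ∀ p, p < N m → Even (lam m p) ∧ c m ≤ (lam m p : ℤ)) →
      (∑ a ∈ A, Ffun k N e lam a) + E = ∑ m ∈ Icc 1 k, ∑ p ∈ range (N m), lam m p := by
    intro lam h1 h2
    rw [hA, Finset.sum_sigma, hE, ← Finset.sum_add_distrib]
    exact Finset.sum_congr rfl (fun t ht => SF lam h1 h2 t ht)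
  by_cases hEn : E ≤ n
  · rw [if_pos hEn]
    set D := (A.finsuppAntidiag (n - E)).filter
        (fun l => ∀ a ∈ A, (2*a.2+2) ∣ l a) with hD
    have hΦ : ∀ (x : {lam : ℕ → ℕ → ℕ //
        (∀ m ∈ Finset.Icc 1 k, ∀ p, p + 1 < N m → lam m (p+1) ≤ lam m p) ∧
        (∀ m ∈ Finset.Icc 1 k, ∀ p, p < N m → Even (lam m p) ∧ c m ≤ (lam m p : ℤ)) ∧
        (∀ m p, (m ∉ Finset.Icc 1 k ∨ N m ≤ p) → lam m p = 0) ∧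
        (∑ m ∈ Finset.Icc 1 k, ∑ p ∈ Finset.range (N m), lam m p) = n}),
        Finsupp.onFinset A (Ffun k N e x.1) (hsupp x.1) ∈ D := by
      rintro ⟨lam, h1, h2, h3, h4⟩
      simp only [hD, Finset.mem_filter, Finset.mem_finsuppAntidiag]
      refine ⟨⟨?_, ?_⟩, ?_⟩
      · have heq : ∀ a ∈ A, (Finsupp.onFinset A (Ffun k N e lam) (hsupp lam)) a
            = Ffun k N e lam a := fun a _ => Finsupp.onFinset_apply
        have := TOT lam h1 h2
        rw [h4] at this
        calc A.sum ⇑(Finsupp.onFinset A (Ffun k N e lam) (hsupp lam))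
            = ∑ a ∈ A, Ffun k N e lam a := Finset.sum_congr rfl heq
          _ = n - E := by omega
      · exact Finsupp.support_onFinset_subset
      · rintro ⟨t, i⟩ ha
        rw [hA, Finset.mem_sigma, Finset.mem_range] at ha
        rw [Finsupp.onFinset_apply]
        simp only [Ffun]
        rw [if_pos (⟨ha.1, ha.2⟩ : t ∈ Icc 1 k ∧ i < N t)]
        obtain ⟨u, hu⟩ := (h2 t ha.1 i ha.2).1
        have hev2 : Even (if i+1 < N t then lam t (i+1) else e t) := by
          split_ifs with h
          · exact (h2 t ha.1 (i+1) h).1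
          · exact he t
        obtain ⟨v, hv⟩ := hev2
        refine ⟨u - v, ?_⟩
        have hd : lam t i - (if i+1 < N t then lam t (i+1) else e t) = 2 * (u - v) := by
          omega
        rw [hd]; ring
    have hΨ : ∀ (l : (Σ _ : ℕ, ℕ) →₀ ℕ), l ∈ D →
        (∀ m ∈ Finset.Icc 1 k, ∀ p, p + 1 < N m → Gfun k N e l m (p+1) ≤ Gfun k N e l m p) ∧
        (∀ m ∈ Finset.Icc 1 k, ∀ p, p < N m → Even (Gfun k N e l m p) ∧ c m ≤ (Gfun k N e l m p : ℤ)) ∧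
        (∀ m p, (m ∉ Finset.Icc 1 k ∨ N m ≤ p) → Gfun k N e l m p = 0) ∧
        (∑ m ∈ Finset.Icc 1 k, ∑ p ∈ Finset.range (N m), Gfun k N e l m p) = n := by
      intro l hl
      simp only [hD, Finset.mem_filter, Finset.mem_finsuppAntidiag] at hl
      obtain ⟨⟨hsum, hsub⟩, hdvd⟩ := hl
      refine ⟨?_, ?_, ?_, ?_⟩
      · intro m hm p hp
        simp only [Gfun]
        rw [if_pos (⟨hm, by omega⟩ : m ∈ Icc 1 k ∧ p + 1 < N m),
          if_pos (⟨hm, by omega⟩ : m ∈ Icc 1 k ∧ p < N m)]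
        have hsub2 : Ico (p+1) (N m) ⊆ Ico p (N m) := Finset.Ico_subset_Ico (by omega) le_rfl
        have hmono : ∑ i ∈ Ico (p+1) (N m), l ⟨m,i⟩/(2*i+2)
            ≤ ∑ i ∈ Ico p (N m), l ⟨m,i⟩/(2*i+2) := Finset.sum_le_sum_of_subset hsub2
        omega
      · intro m hm p hp
        have hev : Even (Gfun k N e l m p) := by
          simp only [Gfun]
          rw [if_pos (⟨hm, hp⟩ : m ∈ Icc 1 k ∧ p < N m)]
          exact (he m).add (even_two_mul _)
        refine ⟨hev, (hce m _ hev).mpr ?_⟩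
        simp only [Gfun]
        rw [if_pos (⟨hm, hp⟩ : m ∈ Icc 1 k ∧ p < N m)]
        exact Nat.le_add_right _ _
      · intro m p hmp
        simp only [Gfun]
        rw [if_neg]
        rintro ⟨hc1, hc2⟩
        rcases hmp with h | h
        · exact h hc1
        · omega
      · have per_t : ∀ t ∈ Icc 1 k, ∑ p ∈ range (N t), Gfun k N e l t p
            = N t * e t + ∑ i ∈ range (N t), l ⟨t,i⟩ := by
          intro t ht
          have hGt : ∀ p ∈ range (N t), Gfun k N e l t p
              = e t + 2 * ∑ i ∈ Ico p (N t), l ⟨t,i⟩ / (2*i+2) := by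
            intro p hp
            simp only [Gfun]
            rw [if_pos (⟨ht, Finset.mem_range.mp hp⟩ : t ∈ Icc 1 k ∧ p < N t)]
          rw [Finset.sum_congr rfl hGt, Finset.sum_add_distrib, Finset.sum_const, card_range,
            smul_eq_mul, ← Finset.mul_sum, swap_sum (fun i => l ⟨t,i⟩ / (2*i+2)) (N t)]
          congr 1
          rw [Finset.mul_sum]
          refine Finset.sum_congr rfl fun i hi => ?_
          rw [Finset.mem_range] at hi
          have hdl := hdvd ⟨t,i⟩ (by rw [hA, Finset.mem_sigma]; exact ⟨ht, Finset.mem_range.mpr hi⟩)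
          calc 2 * ((i+1) * (l ⟨t,i⟩ / (2*i+2))) = (2*i+2) * (l ⟨t,i⟩ / (2*i+2)) := by ring
            _ = l ⟨t,i⟩ := Nat.mul_div_cancel' hdl
        rw [Finset.sum_congr rfl per_t, Finset.sum_add_distrib]
        have hsum' : ∑ x ∈ A, l x = n - E := hsum
        rw [← hE, ← Finset.sum_sigma (Icc 1 k) (fun t => range (N t)) (fun x => l x), ← hA]
        omega
    have LINV : ∀ (lam : ℕ → ℕ → ℕ),
        (∀ m ∈ Finset.Icc 1 k, ∀ p, p + 1 < N m → lam m (p+1) ≤ lam m p) →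
        (∀ m ∈ Finset.Icc 1 k, ∀ p, p < N m → Even (lam m p) ∧ c m ≤ (lam m p : ℤ)) →
        (∀ m p, (m ∉ Finset.Icc 1 k ∨ N m ≤ p) → lam m p = 0) →
        Gfun k N e (Finsupp.onFinset A (Ffun k N e lam) (hsupp lam)) = lam := by
          intro lam h1 h2 h3
          funext t p
          have hlb : ∀ t ∈ Icc 1 k, ∀ p, p < N t → e t ≤ lam t p := fun t ht p hp =>
            (hce t (lam t p) (h2 t ht p hp).1).mp (h2 t ht p hp).2
          by_cases hc : t ∈ Icc 1 k ∧ p < N t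
          · simp only [Gfun]
            rw [if_pos hc]
            have hstep : ∀ i ∈ Ico p (N t),
                (Finsupp.onFinset A (Ffun k N e lam) (hsupp lam)) ⟨t,i⟩ / (2*i+2)
                = ((if i < N t then lam t i else e t)
                    - (if i+1 < N t then lam t (i+1) else e t)) / 2 := by
              intro i hi
              rw [Finset.mem_Ico] at hi
              rw [Finsupp.onFinset_apply]
              simp only [Ffun]
              rw [if_pos (⟨hc.1, hi.2⟩ : t ∈ Icc 1 k ∧ i < N t)]
              rw [if_pos hi.2]
              have h2i : 2*i+2 = (i+1) * 2 := by ring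
              rw [h2i, Nat.mul_div_mul_left _ _ (Nat.succ_pos i)]
            rw [Finset.sum_congr rfl hstep]
            have hy2 : ∀ i, p ≤ i → i < N t →
                (fun i => if i < N t then lam t i else e t) (i+1) ≤
                (fun i => if i < N t then lam t i else e t) i := by
              intro i _ hi
              dsimp only
              rw [if_pos hi]
              by_cases h : i+1 < N t
              · rw [if_pos h]; exact h1 t hc.1 i h
              · rw [if_neg h]; exact hlb t hc.1 i hi
            have hev2 : ∀ i, p ≤ i → i ≤ N t →
                Even ((fun i => if i < N t then lam t i else e t) i) := by
              intro i _ _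
              dsimp only
              split_ifs with h
              · exact (h2 t hc.1 i h).1
              · exact he t
            have ht2 := tele2 (fun i => if i < N t then lam t i else e t) p (N t)
              (le_of_lt hc.2) hy2 hev2
            rw [ht2, if_pos hc.2, if_neg (lt_irrefl (N t))]
            have := hlb t hc.1 p hc.2
            omega
          · simp only [Gfun]
            rw [if_neg hc]
            rcases not_and_or.mp hc with h | h
            · exact (h3 t p (Or.inl h)).symm
            · exact (h3 t p (Or.inr (by omega))).symm
    have RINV : ∀ (l : (Σ _ : ℕ, ℕ) →₀ ℕ), l ∈ D →
        Finsupp.onFinset A (Ffun k N e (Gfun k N e l)) (hsupp _) = l := by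
          intro l hl
          apply Finsupp.ext
          rintro ⟨t, i⟩
          simp only [hD, Finset.mem_filter, Finset.mem_finsuppAntidiag] at hl
          obtain ⟨⟨hsum, hsub⟩, hdvd⟩ := hl
          rw [Finsupp.onFinset_apply]
          by_cases hc : t ∈ Icc 1 k ∧ i < N t
          · simp only [Ffun]
            rw [if_pos hc]
            have hdl := hdvd ⟨t,i⟩
              (by rw [hA, Finset.mem_sigma]; exact ⟨hc.1, Finset.mem_range.mpr hc.2⟩)
            by_cases hc2 : i+1 < N t
            · rw [if_pos hc2]
              simp only [Gfun]
              rw [if_pos hc, if_pos (⟨hc.1, hc2⟩ : t ∈ Icc 1 k ∧ i+1 < N t)]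
              rw [Finset.sum_eq_sum_Ico_succ_bot hc.2]
              set q := l ⟨t,i⟩ / (2*i+2) with hq
              set S := ∑ i' ∈ Ico (i+1) (N t), l ⟨t,i'⟩ / (2*i'+2) with hS
              have hsimp : e t + 2 * (q + S) - (e t + 2 * S) = 2 * q := by omega
              rw [hsimp]
              calc (i+1) * (2*q) = (2*i+2) * q := by ring
                _ = l ⟨t,i⟩ := Nat.mul_div_cancel' hdl
            · rw [if_neg hc2]
              simp only [Gfun]
              rw [if_pos hc]
              have hico : Ico i (N t) = {i} := by
                have hNt : N t = i + 1 := by omega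
                rw [hNt]
                exact Nat.Ico_succ_singleton i
              rw [hico, Finset.sum_singleton]
              have hsimp : e t + 2 * (l ⟨t,i⟩/(2*i+2)) - e t = 2 * (l ⟨t,i⟩/(2*i+2)) := by omega
              rw [hsimp]
              calc (i+1) * (2 * (l ⟨t,i⟩/(2*i+2))) = (2*i+2) * (l ⟨t,i⟩/(2*i+2)) := by ring
                _ = l ⟨t,i⟩ := Nat.mul_div_cancel' hdl
          · simp only [Ffun]
            rw [if_neg hc]
            symm
            rw [← Finsupp.notMem_support_iff]
            intro hmem
            have hmem2 := hsub hmem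
            rw [hA, Finset.mem_sigma, Finset.mem_range] at hmem2
            exact hc hmem2
    have heqv : {lam : ℕ → ℕ → ℕ //
        (∀ m ∈ Finset.Icc 1 k, ∀ p, p + 1 < N m → lam m (p+1) ≤ lam m p) ∧
        (∀ m ∈ Finset.Icc 1 k, ∀ p, p < N m → Even (lam m p) ∧ c m ≤ (lam m p : ℤ)) ∧
        (∀ m p, (m ∉ Finset.Icc 1 k ∨ N m ≤ p) → lam m p = 0) ∧
        (∑ m ∈ Finset.Icc 1 k, ∑ p ∈ Finset.range (N m), lam m p) = n} ≃ {l // l ∈ D} :=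
      { toFun := fun x => ⟨Finsupp.onFinset A (Ffun k N e x.1) (hsupp x.1), hΦ x⟩
        invFun := fun y => ⟨Gfun k N e y.1, hΨ y.1 y.2⟩
        left_inv := fun x => Subtype.ext (LINV x.1 x.2.1 x.2.2.1 x.2.2.2.1)
        right_inv := fun y => Subtype.ext (RINV y.1 y.2) }
    rw [Nat.card_congr heqv, Nat.card_eq_finsetCard, hD]
    congr 1
    exact Finset.filter_congr_decidable _ _ _
  · rw [if_neg hEn]
    have : IsEmpty {lam : ℕ → ℕ → ℕ //
        (∀ m ∈ Finset.Icc 1 k, ∀ p, p + 1 < N m → lam m (p+1) ≤ lam m p) ∧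
        (∀ m ∈ Finset.Icc 1 k, ∀ p, p < N m → Even (lam m p) ∧ c m ≤ (lam m p : ℤ)) ∧
        (∀ m p, (m ∉ Finset.Icc 1 k ∨ N m ≤ p) → lam m p = 0) ∧
        (∑ m ∈ Finset.Icc 1 k, ∑ p ∈ Finset.range (N m), lam m p) = n} := by
      constructor
      rintro ⟨lam, h1, h2, h3, h4⟩
      have := TOT lam h1 h2
      rw [h4] at this
      omega
    exact Nat.card_of_isEmpty


/-- For `j + r ≤ k` and fixed `s₁ ≥ ⋯ ≥ s_k ≥ 0` (with `s_{k+1} = 0`), the generating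
function for `k`-tuples of partitions `(λ⁽¹⁾,…,λ⁽ᵏ⁾)` — `λ⁽ᵐ⁾` having exactly
`s_m - s_{m+1}` parts (here `lam m p` is the `p`-th part of `λ⁽ᵐ⁾`, padded by `0`
elsewhere), all parts even and each at least `m - j + max{m-(k-r),0}` — equals
`q^{2s_{j+1} + 2s_{j+3} + ⋯ (± up to k-r) + 2(s_{k-r+1} + ⋯ + s_k)}` divided by
`(q²;q²)_{s₁-s₂} ⋯ (q²;q²)_{s_{k-1}-s_k}(q²;q²)_{s_k}`; the first exponent group is the
sum of `2 s_t` over `j < t ≤ k-r` with `t - j` odd. -/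
theorem stmt5 (j r k : ℕ) (hk : 1 ≤ k) (hjr : j + r ≤ k) (s : ℕ → ℕ)
    (hdec : ∀ m, 1 ≤ m → m ≤ k → s (m+1) ≤ s m) (hsk : s (k+1) = 0) :
    PowerSeries.mk (fun n =>
      (Nat.card {lam : ℕ → ℕ → ℕ //
        (∀ m ∈ Finset.Icc 1 k, ∀ p, p + 1 < s m - s (m+1) → lam m (p+1) ≤ lam m p) ∧
        (∀ m ∈ Finset.Icc 1 k, ∀ p, p < s m - s (m+1) →
          Even (lam m p) ∧ (m : ℤ) - j + max ((m : ℤ) - ((k : ℤ) - r)) 0 ≤ lam m p) ∧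
        (∀ m p, (m ∉ Finset.Icc 1 k ∨ s m - s (m+1) ≤ p) → lam m p = 0) ∧
        (∑ m ∈ Finset.Icc 1 k, ∑ p ∈ Finset.range (s m - s (m+1)), lam m p) = n} : ℚ))
    = (PowerSeries.X : PowerSeries ℚ) ^
        (2 * ∑ t ∈ (Finset.Icc (j+1) (k-r)).filter (fun t => Odd (t - j)), s t
          + 2 * ∑ t ∈ Finset.Icc (k-r+1) k, s t)
      * ∏ t ∈ Finset.Icc 1 k, (poch2 (s t - s (t+1)))⁻¹ := by
  classical
  have hrk : r ≤ k := by omega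
  have hj : j ≤ k - r := by omega
  rw [exponent_eq j r k hjr s hdec hsk]
  have hprod : ∏ t ∈ Finset.Icc 1 k, (poch2 (s t - s (t+1)))⁻¹
      = ∏ a ∈ ((Finset.Icc 1 k).sigma fun t => Finset.range (s t - s (t+1))),
          (1 - (PowerSeries.X : PowerSeries ℚ) ^ (2*a.2+2))⁻¹ := by
    rw [Finset.prod_sigma]
    refine Finset.prod_congr rfl fun t ht => ?_
    rw [poch2, prod_inv]
  rw [hprod]
  ext n
  rw [PowerSeries.coeff_mk, mul_comm, PowerSeries.coeff_mul_X_pow']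
  have hcg := coeff_prod_geom ((Finset.Icc 1 k).sigma fun t => Finset.range (s t - s (t+1)))
      (fun a => 2*a.2+2) (fun a _ => by show 1 ≤ 2*a.2+2; omega)
      (n - ∑ t ∈ Finset.Icc 1 k, (s t - s (t+1)) * eN j r k t)
  beta_reduce at hcg
  rw [hcg]
  have hkc := key_card k (fun t => s t - s (t+1)) (eN j r k)
      (fun m => (m:ℤ) - j + max ((m:ℤ) - ((k:ℤ) - r)) 0) (eN_even j r k)
      (fun m v hv => keyEven j r k hrk hj m v hv) n
  beta_reduce at hkc
  rw [hkc]
  split_ifs with h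
  · norm_cast
    try rfl
    try (congr 1; exact Finset.filter_congr_decidable _ _ _)
  · simp
end

section
/- Let a, b ≥ 1, k be non-negative integers with 2a + 2b - 1 ≤ k, and let Z^e_{a,b,k}, Z̃^e_{a,b,k} be as follows: Z^e_{a,b,k} consists of frequency sequences f with f_i + f_{i+1} ≤ k for all i ≥ 0, f_i = 0 for i < 0, f_0 ≤ 2a, 2f_0 + f_1 ≤ k - 2b + 2a, and f_i even for all even i; Z̃^e_{a,b,k} is the same with bound k - 2b + 2a + 1. Then as formal power series, (1 + q) Σ_{f ∈ Z̃^e_{a,b,k}} q^{|f|} = Σ_{f ∈ Z^e_{a,b-1,k}} q^{|f|} + q Σ_{f ∈ Z^e_{a,b,k}} q^{|f|}. -/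
/-- The set `Z^e_{a,b,k}` of frequency sequences `f : ℤ → ℕ` with finite support such
that `f_i + f_{i+1} ≤ k` for all `i ≥ 0`, `f_i = 0` for `i < 0`, `f_0 ≤ 2a`,
`2f_0 + f_1 ≤ k - 2b + 2a`, and `f_i` even for every even `i`. -/
def ZsetE (a b k : ℕ) : Set (ℤ → ℕ) :=
  {f | (Function.support f).Finite ∧ (∀ i : ℤ, 0 ≤ i → f i + f (i+1) ≤ k) ∧
    (∀ i : ℤ, i < 0 → f i = 0) ∧ f 0 ≤ 2*a ∧
    2*(f 0 : ℤ) + (f 1 : ℤ) ≤ (k : ℤ) - 2*b + 2*a ∧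
    ∀ i : ℤ, Even i → Even (f i)}

/-- The set `Z̃^e_{a,b,k}`: as `Z^e_{a,b,k}` but with `2f_0 + f_1 ≤ k - 2b + 2a + 1`. -/
def ZtilE (a b k : ℕ) : Set (ℤ → ℕ) :=
  {f | (Function.support f).Finite ∧ (∀ i : ℤ, 0 ≤ i → f i + f (i+1) ≤ k) ∧
    (∀ i : ℤ, i < 0 → f i = 0) ∧ f 0 ≤ 2*a ∧
    2*(f 0 : ℤ) + (f 1 : ℤ) ≤ (k : ℤ) - 2*b + 2*a + 1 ∧
    ∀ i : ℤ, Even i → Even (f i)}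

/-- The generating function of a set of frequency sequences: the coefficient of `qⁿ` is
the number of its elements of weight `n` (the weight being `∑ i·f_i`). -/
noncomputable def GF (S : Set (ℤ → ℕ)) : PowerSeries ℚ :=
  PowerSeries.mk fun n =>
    (Nat.card {f : ℤ → ℕ // f ∈ S ∧ ∑ᶠ i : ℤ, i * (f i : ℤ) = (n : ℤ)} : ℚ)



noncomputable def wtZ (f : ℤ → ℕ) : ℤ := ∑ᶠ i : ℤ, i * (f i : ℤ)

lemma wt_support_sub (f : ℤ → ℕ) :
    Function.support (fun i : ℤ => i * (f i : ℤ)) ⊆ Function.support f := by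
  intro i hi
  simp only [Function.mem_support] at *
  intro h
  apply hi
  simp [h]

lemma term_nonneg (f : ℤ → ℕ) (hneg : ∀ i : ℤ, i < 0 → f i = 0) (i : ℤ) :
    0 ≤ i * (f i : ℤ) := by
  rcases lt_or_ge i 0 with h | h
  · simp [hneg i h]
  · exact mul_nonneg h (by positivity)

lemma single_le_wt (f : ℤ → ℕ) (hf : (Function.support f).Finite)
    (hneg : ∀ i : ℤ, i < 0 → f i = 0) (j : ℤ) : j * (f j : ℤ) ≤ wtZ f :=
  single_le_finsum j (hf.subset (wt_support_sub f)) (term_nonneg f hneg)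

lemma apply_eq_zero_of_gt (f : ℤ → ℕ) (hf : (Function.support f).Finite)
    (hneg : ∀ i : ℤ, i < 0 → f i = 0) {n : ℕ} (hw : wtZ f = (n : ℤ)) {i : ℤ}
    (hi : (n : ℤ) < i) : f i = 0 := by
  by_contra h
  have h1 : (1 : ℤ) ≤ (f i : ℤ) := by exact_mod_cast Nat.one_le_iff_ne_zero.mpr h
  have h2 := single_le_wt f hf hneg i
  rw [hw] at h2
  nlinarith

lemma wt_update (f : ℤ → ℕ) (hf : (Function.support f).Finite) (j : ℤ) (v : ℕ) :
    wtZ (Function.update f j v) = wtZ f + j * ((v : ℤ) - (f j : ℤ)) := by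
  classical
  set s : Finset ℤ := insert j hf.toFinset with hs
  have hj : j ∈ s := Finset.mem_insert_self _ _
  have h1 : wtZ f = ∑ i ∈ s, i * (f i : ℤ) := by
    apply finsum_eq_finset_sum_of_support_subset
    intro i hi
    have hi' := wt_support_sub f hi
    simp only [hs, Finset.coe_insert, Set.mem_insert_iff]
    right
    exact hf.mem_toFinset.2 hi'
  have h2 : wtZ (Function.update f j v)
      = ∑ i ∈ s, i * ((Function.update f j v i : ℕ) : ℤ) := by
    apply finsum_eq_finset_sum_of_support_subset
    intro i hi
    have hi' := wt_support_sub _ hi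
    rcases eq_or_ne i j with rfl | hij
    · simp [hs]
    · rw [Function.mem_support, Function.update_of_ne hij] at hi'
      simp only [hs, Finset.coe_insert, Set.mem_insert_iff]
      right
      exact hf.mem_toFinset.2 hi'
  rw [h1, h2, ← Finset.sum_erase_add _ _ hj, ← Finset.sum_erase_add s _ hj]
  have hcongr : ∀ i ∈ s.erase j,
      i * ((Function.update f j v i : ℕ) : ℤ) = i * (f i : ℤ) := by
    intro i hi
    rw [Function.update_of_ne (Finset.ne_of_mem_erase hi)]
  rw [Finset.sum_congr rfl hcongr, Function.update_self]
  ring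

lemma finite_level (a n : ℕ) :
    {f : ℤ → ℕ | (Function.support f).Finite ∧ (∀ i : ℤ, i < 0 → f i = 0) ∧
      f 0 ≤ 2*a ∧ wtZ f = (n : ℤ)}.Finite := by
  set S := {f : ℤ → ℕ | (Function.support f).Finite ∧ (∀ i : ℤ, i < 0 → f i = 0) ∧
      f 0 ≤ 2*a ∧ wtZ f = (n : ℤ)} with hS
  have hbound : ∀ f ∈ S, ∀ i : ℤ, f i ≤ 2*a + n := by
    intro f hf i
    obtain ⟨hfin, hneg, h0, hw⟩ := hf
    rcases lt_trichotomy i 0 with h | h | h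
    · simp [hneg i h]
    · subst h; omega
    · rcases le_or_gt i n with h' | h'
      · have h2 := single_le_wt f hfin hneg i
        rw [hw] at h2
        have h3 : (f i : ℤ) ≤ i * (f i : ℤ) :=
          le_mul_of_one_le_left (by positivity) (by omega)
        have : (f i : ℤ) ≤ (n : ℤ) := le_trans h3 h2
        omega
      · simp [apply_eq_zero_of_gt f hfin hneg hw h']
  haveI : Finite ↥S := by
    apply Finite.of_injective
      (fun f : ↥S => fun i : Finset.Icc (0:ℤ) (n:ℤ) =>
        (⟨f.1 i.1, by have := hbound f.1 f.2 i.1; omega⟩ : Fin (2*a + n + 1)))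
    intro f g hfg
    have key : ∀ i ∈ Finset.Icc (0:ℤ) (n:ℤ), f.1 i = g.1 i := by
      intro i hi
      exact congrArg Fin.val (congrFun hfg ⟨i, hi⟩)
    apply Subtype.ext
    funext i
    obtain ⟨hfin, hneg, h0, hw⟩ := f.2
    obtain ⟨hfin', hneg', h0', hw'⟩ := g.2
    rcases lt_trichotomy i 0 with h | h | h
    · rw [hneg i h, hneg' i h]
    · subst h
      exact key 0 (by simp)
    · rcases le_or_gt i n with h' | h'
      · exact key i (Finset.mem_Icc.mpr ⟨le_of_lt h, h'⟩)
      · rw [apply_eq_zero_of_gt f.1 hfin hneg hw h',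
          apply_eq_zero_of_gt g.1 hfin' hneg' hw' h']
  exact S.toFinite

lemma coeff_GF (S : Set (ℤ → ℕ)) (n : ℕ) :
    (PowerSeries.coeff n) (GF S)
      = ({f : ℤ → ℕ | f ∈ S ∧ wtZ f = (n : ℤ)}.ncard : ℚ) := by
  rw [GF, PowerSeries.coeff_mk, ← Nat.card_coe_set_eq]
  rfl

/-- exceptional set inside `Z^e_{a,b-1,k}` -/
def Aset (a b k : ℕ) : Set (ℤ → ℕ) :=
  {f | f ∈ ZsetE a (b-1) k ∧ 2*(f 0 : ℤ) + (f 1 : ℤ) = (k : ℤ) - 2*b + 2*a + 2}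

/-- exceptional set inside `Z̃^e_{a,b,k}` -/
def Bset (a b k : ℕ) : Set (ℤ → ℕ) :=
  {f | f ∈ ZtilE a b k ∧ 2*(f 0 : ℤ) + (f 1 : ℤ) = (k : ℤ) - 2*b + 2*a + 1}

lemma decomp1 (a b k : ℕ) (hb : 1 ≤ b) :
    ZsetE a (b-1) k = ZtilE a b k ∪ Aset a b k := by
  have hc : ((b-1 : ℕ) : ℤ) = (b : ℤ) - 1 := by omega
  ext f
  simp only [ZsetE, ZtilE, Aset, Set.mem_union, Set.mem_setOf_eq, hc]
  constructor
  · rintro ⟨h1, h2, h3, h4, h5, h6⟩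
    rcases lt_or_eq_of_le h5 with h | h
    · exact Or.inl ⟨h1, h2, h3, h4, by linarith, h6⟩
    · exact Or.inr ⟨⟨h1, h2, h3, h4, h5, h6⟩, by linarith⟩
  · rintro (⟨h1, h2, h3, h4, h5, h6⟩ | ⟨⟨h1, h2, h3, h4, h5, h6⟩, h7⟩)
    · exact ⟨h1, h2, h3, h4, by linarith, h6⟩
    · exact ⟨h1, h2, h3, h4, h5, h6⟩

lemma decomp2 (a b k : ℕ) :
    ZtilE a b k = ZsetE a b k ∪ Bset a b k := by
  ext f
  simp only [ZsetE, ZtilE, Bset, Set.mem_union, Set.mem_setOf_eq]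
  constructor
  · rintro ⟨h1, h2, h3, h4, h5, h6⟩
    rcases lt_or_eq_of_le h5 with h | h
    · exact Or.inl ⟨h1, h2, h3, h4, by linarith, h6⟩
    · exact Or.inr ⟨⟨h1, h2, h3, h4, h5, h6⟩, h⟩
  · rintro (⟨h1, h2, h3, h4, h5, h6⟩ | ⟨⟨h1, h2, h3, h4, h5, h6⟩, h7⟩)
    · exact ⟨h1, h2, h3, h4, by linarith, h6⟩
    · exact ⟨h1, h2, h3, h4, h5, h6⟩

lemma mem_Aset_iff (a b k : ℕ) (hb : 1 ≤ b) (f : ℤ → ℕ) :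
    f ∈ Aset a b k ↔ (Function.support f).Finite ∧
      (∀ i : ℤ, 0 ≤ i → f i + f (i+1) ≤ k) ∧
      (∀ i : ℤ, i < 0 → f i = 0) ∧ f 0 ≤ 2*a ∧
      2*(f 0 : ℤ) + (f 1 : ℤ) = (k : ℤ) - 2*b + 2*a + 2 ∧
      ∀ i : ℤ, Even i → Even (f i) := by
  have hc : ((b-1 : ℕ) : ℤ) = (b : ℤ) - 1 := by omega
  simp only [Aset, ZsetE, Set.mem_setOf_eq, hc]
  constructor
  · rintro ⟨⟨h1,h2,h3,h4,h5,h6⟩,h7⟩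
    exact ⟨h1,h2,h3,h4,by linarith,h6⟩
  · rintro ⟨h1,h2,h3,h4,h5,h6⟩
    exact ⟨⟨h1,h2,h3,h4,by linarith,h6⟩, by linarith⟩

lemma mem_Bset_iff (a b k : ℕ) (f : ℤ → ℕ) :
    f ∈ Bset a b k ↔ (Function.support f).Finite ∧
      (∀ i : ℤ, 0 ≤ i → f i + f (i+1) ≤ k) ∧
      (∀ i : ℤ, i < 0 → f i = 0) ∧ f 0 ≤ 2*a ∧
      2*(f 0 : ℤ) + (f 1 : ℤ) = (k : ℤ) - 2*b + 2*a + 1 ∧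
      ∀ i : ℤ, Even i → Even (f i) := by
  simp only [Bset, ZtilE, Set.mem_setOf_eq]
  constructor
  · rintro ⟨⟨h1,h2,h3,h4,h5,h6⟩,h7⟩
    exact ⟨h1,h2,h3,h4,h7,h6⟩
  · rintro ⟨h1,h2,h3,h4,h5,h6⟩
    exact ⟨⟨h1,h2,h3,h4,le_of_eq h5,h6⟩, h5⟩

lemma A_one_pos (a b k : ℕ) (hb : 1 ≤ b) (hk : 2*a + 2*b ≤ k + 1)
    {f : ℤ → ℕ} (hf : f ∈ Aset a b k) : 1 ≤ f 1 := by
  rw [mem_Aset_iff a b k hb] at hf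
  obtain ⟨h1, h2, h3, h4, h5, h6⟩ := hf
  omega

lemma AB_card (a b k : ℕ) (hb : 1 ≤ b) (hk : 2*a + 2*b ≤ k + 1) (n : ℕ) :
    {f | f ∈ Aset a b k ∧ wtZ f = (n : ℤ) + 1}.ncard
      = {f | f ∈ Bset a b k ∧ wtZ f = (n : ℤ)}.ncard := by
  set φ : (ℤ → ℕ) → (ℤ → ℕ) := fun f => Function.update f 1 (f 1 - 1) with hφ
  have hne1 : ∀ (f : ℤ → ℕ) (i : ℤ), i ≠ 1 → φ f i = f i := by
    intro f i hi
    simp only [hφ]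
    exact Function.update_of_ne hi _ _
  have hat1 : ∀ f : ℤ → ℕ, φ f 1 = f 1 - 1 := by
    intro f; simp [hφ]
  have hinj : Set.InjOn φ {f | f ∈ Aset a b k ∧ wtZ f = (n : ℤ) + 1} := by
    intro f hf g hg hfg
    funext i
    rcases eq_or_ne i 1 with rfl | hi
    · have e1 := congrFun hfg 1
      rw [hat1, hat1] at e1
      have := A_one_pos a b k hb hk hf.1
      have := A_one_pos a b k hb hk hg.1
      omega
    · have e1 := congrFun hfg i
      rwa [hne1 f i hi, hne1 g i hi] at e1
  rw [← Set.ncard_image_of_injOn hinj]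
  congr 1
  apply Set.Subset.antisymm
  · rintro g ⟨f, ⟨hfA, hfw⟩, rfl⟩
    have hf1 : 1 ≤ f 1 := A_one_pos a b k hb hk hfA
    rw [mem_Aset_iff a b k hb] at hfA
    obtain ⟨h1, h2, h3, h4, h5, h6⟩ := hfA
    have hle : ∀ i, φ f i ≤ f i := by
      intro i
      rcases eq_or_ne i 1 with rfl | hi
      · rw [hat1]; omega
      · rw [hne1 f i hi]
    constructor
    · rw [mem_Bset_iff]
      refine ⟨h1.subset ?_, ?_, ?_, ?_, ?_, ?_⟩
      · intro i hi
        simp only [Function.mem_support] at hi ⊢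
        have := hle i; omega
      · intro i hi
        have := hle i; have := hle (i+1)
        have := h2 i hi; omega
      · intro i hi
        rw [hne1 f i (by omega)]
        exact h3 i hi
      · rw [hne1 f 0 (by norm_num)]; exact h4
      · rw [hne1 f 0 (by norm_num), hat1]; omega
      · intro i hi
        have hi1 : i ≠ 1 := by
          rintro rfl
          exact (Int.not_odd_iff_even.mpr hi) odd_one
        rw [hne1 f i hi1]
        exact h6 i hi
    · show wtZ (Function.update f 1 (f 1 - 1)) = (n : ℤ)
      rw [wt_update f h1 1 (f 1 - 1), hfw]
      have hc1 : ((f 1 - 1 : ℕ) : ℤ) = (f 1 : ℤ) - 1 := by omega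
      rw [hc1]
      ring
  · rintro g ⟨hgB, hgw⟩
    rw [mem_Bset_iff] at hgB
    obtain ⟨h1, h2, h3, h4, h5, h6⟩ := hgB
    refine ⟨Function.update g 1 (g 1 + 1), ⟨?_, ?_⟩, ?_⟩
    · rw [mem_Aset_iff a b k hb]
      have hfne : ∀ i : ℤ, i ≠ 1 → Function.update g 1 (g 1 + 1) i = g i :=
        fun i hi => Function.update_of_ne hi _ _
      have hf1 : Function.update g 1 (g 1 + 1) 1 = g 1 + 1 := Function.update_self _ _ _
      have hg0even : Even (g 0) := h6 0 Even.zero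
      have hg2even : Even (g 2) := h6 2 (by decide)
      obtain ⟨c, hc⟩ := hg0even
      obtain ⟨d, hd⟩ := hg2even
      refine ⟨(h1.union (Set.finite_singleton 1)).subset ?_, ?_, ?_, ?_, ?_, ?_⟩
      · intro i hi
        rcases eq_or_ne i 1 with rfl | hij
        · exact Or.inr rfl
        · left
          simp only [Function.mem_support] at hi ⊢
          rwa [hfne i hij] at hi
      · intro i hi
        rcases eq_or_ne i 0 with rfl | hi0
        · rw [show (0:ℤ)+1 = 1 from by norm_num, hf1, hfne 0 (by norm_num)]
          have h20 : g 0 + g 1 ≤ k := by simpa using h2 0 le_rfl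
          omega
        · rcases eq_or_ne i 1 with rfl | hi1
          · rw [show (1:ℤ)+1 = 2 from by norm_num, hf1, hfne 2 (by norm_num)]
            have h21 : g 1 + g 2 ≤ k := by simpa using h2 1 (by norm_num)
            omega
          · rw [hfne i hi1, hfne (i+1) (by omega)]
            exact h2 i hi
      · intro i hi
        rw [hfne i (by omega)]
        exact h3 i hi
      · rw [hfne 0 (by norm_num)]; exact h4
      · rw [hfne 0 (by norm_num), hf1]
        push_cast
        omega
      · intro i hi
        have hi1 : i ≠ 1 := by
          rintro rfl
          exact (Int.not_odd_iff_even.mpr hi) odd_one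
        rw [hfne i hi1]
        exact h6 i hi
    · rw [wt_update g h1 1 (g 1 + 1), hgw]
      push_cast
      ring
    · funext i
      rcases eq_or_ne i 1 with rfl | hi
      · rw [hat1, Function.update_self]
        omega
      · rw [hne1 _ i hi, Function.update_of_ne hi]

lemma finite_sub (a n : ℕ) {T : Set (ℤ → ℕ)}
    (hT : ∀ f ∈ T, (Function.support f).Finite ∧ (∀ i : ℤ, i < 0 → f i = 0) ∧ f 0 ≤ 2*a) :
    {f | f ∈ T ∧ wtZ f = (n : ℤ)}.Finite := by
  apply (finite_level a n).subset
  rintro f ⟨hf, hw⟩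
  obtain ⟨x, y, z⟩ := hT f hf
  exact ⟨x, y, z, hw⟩

lemma basic_Zset (a b k : ℕ) : ∀ f ∈ ZsetE a b k,
    (Function.support f).Finite ∧ (∀ i : ℤ, i < 0 → f i = 0) ∧ f 0 ≤ 2*a :=
  fun f hf => ⟨hf.1, hf.2.2.1, hf.2.2.2.1⟩

lemma basic_Ztil (a b k : ℕ) : ∀ f ∈ ZtilE a b k,
    (Function.support f).Finite ∧ (∀ i : ℤ, i < 0 → f i = 0) ∧ f 0 ≤ 2*a :=
  fun f hf => ⟨hf.1, hf.2.2.1, hf.2.2.2.1⟩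

lemma level0 (a b k : ℕ) (hb : 1 ≤ b) (hk : 2*a + 2*b ≤ k + 1) :
    {f | f ∈ ZtilE a b k ∧ wtZ f = ((0:ℕ) : ℤ)}
      = {f | f ∈ ZsetE a (b-1) k ∧ wtZ f = ((0:ℕ) : ℤ)} := by
  have hc : ((b-1 : ℕ) : ℤ) = (b : ℤ) - 1 := by omega
  ext f
  simp only [Set.mem_setOf_eq, ZtilE, ZsetE, hc]
  constructor
  · rintro ⟨⟨h1,h2,h3,h4,h5,h6⟩, hw⟩
    exact ⟨⟨h1,h2,h3,h4, by omega, h6⟩, hw⟩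
  · rintro ⟨⟨h1,h2,h3,h4,h5,h6⟩, hw⟩
    have hf1 : f 1 = 0 := apply_eq_zero_of_gt f h1 h3 hw (by norm_num)
    have h20 : f 0 + f 1 ≤ k := by simpa using h2 0 le_rfl
    refine ⟨⟨h1,h2,h3,h4, ?_, h6⟩, hw⟩
    rw [hf1] at h5 ⊢
    omega

lemma hsplit_level {S T U : Set (ℤ → ℕ)} (h : S = T ∪ U) (w : ℤ) :
    {f | f ∈ S ∧ wtZ f = w} = {f | f ∈ T ∧ wtZ f = w} ∪ {f | f ∈ U ∧ wtZ f = w} := by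
  rw [h]
  ext f
  simp only [Set.mem_setOf_eq, Set.mem_union]
  tauto

lemma key_count (a b k : ℕ) (hb : 1 ≤ b) (hk : 2*a + 2*b ≤ k + 1) (m : ℕ) :
    {f | f ∈ ZtilE a b k ∧ wtZ f = ((m+1 : ℕ) : ℤ)}.ncard
      + {f | f ∈ ZtilE a b k ∧ wtZ f = ((m : ℕ) : ℤ)}.ncard
    = {f | f ∈ ZsetE a (b-1) k ∧ wtZ f = ((m+1 : ℕ) : ℤ)}.ncard
      + {f | f ∈ ZsetE a b k ∧ wtZ f = ((m : ℕ) : ℤ)}.ncard := by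
  have hcm : ((m+1 : ℕ) : ℤ) = (m : ℤ) + 1 := by push_cast; ring
  have e1 := hsplit_level (decomp1 a b k hb) ((m+1 : ℕ) : ℤ)
  have e2 := hsplit_level (decomp2 a b k) ((m : ℕ) : ℤ)
  have hd1 : Disjoint {f | f ∈ ZtilE a b k ∧ wtZ f = ((m+1 : ℕ) : ℤ)}
      {f | f ∈ Aset a b k ∧ wtZ f = ((m+1 : ℕ) : ℤ)} := by
    rw [Set.disjoint_left]
    rintro f ⟨hf, _⟩ ⟨hfA, _⟩
    have hle := hf.2.2.2.2.1
    obtain ⟨_, _, _, _, heq, _⟩ := (mem_Aset_iff a b k hb f).mp hfA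
    linarith
  have hd2 : Disjoint {f | f ∈ ZsetE a b k ∧ wtZ f = ((m : ℕ) : ℤ)}
      {f | f ∈ Bset a b k ∧ wtZ f = ((m : ℕ) : ℤ)} := by
    rw [Set.disjoint_left]
    rintro f ⟨hf, _⟩ ⟨hfB, _⟩
    have hle := hf.2.2.2.2.1
    obtain ⟨_, _, _, _, heq, _⟩ := (mem_Bset_iff a b k f).mp hfB
    linarith
  have fin1 : {f | f ∈ ZtilE a b k ∧ wtZ f = ((m+1 : ℕ) : ℤ)}.Finite :=
    finite_sub a (m+1) (basic_Ztil a b k)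
  have finA : {f | f ∈ Aset a b k ∧ wtZ f = ((m+1 : ℕ) : ℤ)}.Finite :=
    finite_sub a (m+1) (fun f hf => basic_Zset a (b-1) k f hf.1)
  have fin2 : {f | f ∈ ZsetE a b k ∧ wtZ f = ((m : ℕ) : ℤ)}.Finite :=
    finite_sub a m (basic_Zset a b k)
  have finB : {f | f ∈ Bset a b k ∧ wtZ f = ((m : ℕ) : ℤ)}.Finite :=
    finite_sub a m (fun f hf => basic_Ztil a b k f hf.1)
  have c1 : {f | f ∈ ZsetE a (b-1) k ∧ wtZ f = ((m+1 : ℕ) : ℤ)}.ncard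
      = {f | f ∈ ZtilE a b k ∧ wtZ f = ((m+1 : ℕ) : ℤ)}.ncard
        + {f | f ∈ Aset a b k ∧ wtZ f = ((m+1 : ℕ) : ℤ)}.ncard := by
    rw [e1, Set.ncard_union_eq hd1 fin1 finA]
  have c2 : {f | f ∈ ZtilE a b k ∧ wtZ f = ((m : ℕ) : ℤ)}.ncard
      = {f | f ∈ ZsetE a b k ∧ wtZ f = ((m : ℕ) : ℤ)}.ncard
        + {f | f ∈ Bset a b k ∧ wtZ f = ((m : ℕ) : ℤ)}.ncard := by
    rw [e2, Set.ncard_union_eq hd2 fin2 finB]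
  have c3 : {f | f ∈ Aset a b k ∧ wtZ f = ((m+1 : ℕ) : ℤ)}.ncard
      = {f | f ∈ Bset a b k ∧ wtZ f = ((m : ℕ) : ℤ)}.ncard := by
    simp only [hcm]
    exact AB_card a b k hb hk m
  omega


/-- `(1 + q) Σ_{f ∈ Z̃^e_{a,b,k}} q^{|f|}
  = Σ_{f ∈ Z^e_{a,b-1,k}} q^{|f|} + q Σ_{f ∈ Z^e_{a,b,k}} q^{|f|}`. -/
theorem stmt11 (a b k : ℕ) (hb : 1 ≤ b) (hk : 2*a + 2*b ≤ k + 1) :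
    (1 + PowerSeries.X) * GF (ZtilE a b k)
      = GF (ZsetE a (b-1) k) + PowerSeries.X * GF (ZsetE a b k) := by
  apply PowerSeries.ext
  intro n
  rw [add_mul, one_mul, map_add, map_add]
  cases n with
  | zero =>
      rw [PowerSeries.coeff_zero_X_mul, PowerSeries.coeff_zero_X_mul, coeff_GF, coeff_GF,
        level0 a b k hb hk]
  | succ m =>
      rw [PowerSeries.coeff_succ_X_mul, PowerSeries.coeff_succ_X_mul, coeff_GF, coeff_GF,
        coeff_GF, coeff_GF]
      exact_mod_cast congrArg (fun x : ℕ => (x : ℚ)) (key_count a b k hb hk m)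
end

section
/- For non-negative integers a, b, k with 2a + 2b ≤ k and fixed s₁ ≥ ⋯ ≥ s_k ≥ 0 (with s_{k+1} = 0), the generating function for k-tuples of partitions λ = (λ⁽¹⁾,...,λ⁽ᵏ⁾), where λ⁽ᵐ⁾ has exactly s_m - s_{m+1} parts, all parts even, each at least m + max{m - 2a, 0} + max{m - (k - 2b), 0}, equals q^{2(s₁ + s₃ + ⋯ + s_{2a-1}) + 2(s_{2a+1} + s_{2a+2} + ⋯ + s_{k-2b}) + (4s_{k-2b+1} + 2s_{k-2b+2} + 4s_{k-2b+3} + ⋯ + 4s_{k-1} + 2s_k)} / ((q²;q²)_{s₁-s₂} ⋯ (q²;q²)_{s_{k-1}-s_k}(q²;q²)_{s_k}). -/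
namespace Stmt12Aux

open PowerSeries Finset

/-- Block predicate: `f` is a weakly decreasing sequence of `n` even parts,
each at least `2*c`, and zero from index `n` on. -/
def BP (c n : ℕ) (f : ℕ → ℕ) : Prop :=
  (∀ p, p + 1 < n → f (p + 1) ≤ f p) ∧
  (∀ p, p < n → Even (f p) ∧ 2 * c ≤ f p) ∧
  (∀ p, n ≤ p → f p = 0)

lemma BP.anti {c n : ℕ} {f : ℕ → ℕ} (h : BP c n f) :
    ∀ p q, p ≤ q → q < n → f q ≤ f p := by
  have key : ∀ d p, p + d < n → f (p + d) ≤ f p := by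
    intro d
    induction d with
    | zero => intro p _; exact le_rfl
    | succ d ih =>
      intro p hp
      have h1 : p + d + 1 < n := by omega
      exact le_trans (h.1 (p + d) h1) (ih p (by omega))
  intro p q hpq hq
  have : q = p + (q - p) := by omega
  rw [this]
  exact key _ _ (by omega)

noncomputable def bcount (c n N : ℕ) : ℕ :=
  Nat.card {f : ℕ → ℕ // BP c n f ∧ ∑ p ∈ range n, f p = N}

lemma bfinite (c n N : ℕ) :
    Finite {f : ℕ → ℕ // BP c n f ∧ ∑ p ∈ range n, f p = N} := by
  apply Finite.of_injective
    (fun f => (fun i : Fin n => (⟨f.1 i, by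
      have h1 : f.1 i ≤ ∑ p ∈ range n, f.1 p :=
        Finset.single_le_sum (fun p _ => Nat.zero_le _) (mem_range.mpr i.2)
      have := f.2.2
      omega⟩ : Fin (N + 1))))
  intro f g h
  apply Subtype.ext
  funext p
  by_cases hp : p < n
  · exact congrArg Fin.val (congrFun h ⟨p, hp⟩)
  · rw [f.2.1.2.2 p (by omega), g.2.1.2.2 p (by omega)]

lemma bcount_shift (c n N : ℕ) :
    bcount c n N = if 2 * c * n ≤ N then bcount 0 n (N - 2 * c * n) else 0 := by
  split_ifs with h
  · refine Nat.card_congr ?_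
    refine
      { toFun := fun f => ⟨fun p => f.1 p - 2 * c, ?_⟩
        invFun := fun g => ⟨fun p => if p < n then g.1 p + 2 * c else 0, ?_⟩
        left_inv := ?_
        right_inv := ?_ }
    · obtain ⟨⟨h1, h2, h3⟩, h4⟩ := f.2
      refine ⟨⟨fun p hp => Nat.sub_le_sub_right (h1 p hp) _, fun p hp => ?_,
        fun p hp => by simp [h3 p hp]⟩, ?_⟩
      · have he := (h2 p hp).1
        have hle := (h2 p hp).2
        refine ⟨?_, by omega⟩
        rw [Nat.even_sub hle]
        simp [he, Nat.even_iff]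
      · rw [Finset.sum_tsub_distrib _ (fun p hp => (h2 p (mem_range.mp hp)).2), h4]
        simp [Finset.sum_const, mul_comm]
    · obtain ⟨⟨h1, h2, h3⟩, h4⟩ := g.2
      refine ⟨⟨fun p hp => ?_, fun p hp => ?_, fun p hp => by
          simp only [if_neg (by omega : ¬ p < n)]⟩, ?_⟩
      · simp only [if_pos (by omega : p + 1 < n), if_pos (by omega : p < n)]
        exact Nat.add_le_add_right (h1 p hp) _
      · simp only [if_pos hp]
        exact ⟨(h2 p hp).1.add (even_two_mul c), by omega⟩
      · rw [Finset.sum_congr rfl (fun p hp => if_pos (mem_range.mp hp)),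
          Finset.sum_add_distrib, h4]
        simp only [Finset.sum_const, card_range, smul_eq_mul]
        have : n * (2 * c) = 2 * c * n := by ring
        rw [this]
        exact Nat.sub_add_cancel h
    · rintro ⟨f, ⟨h1, h2, h3⟩, h4⟩
      apply Subtype.ext
      funext p
      by_cases hp : p < n
      · have := (h2 p hp).2
        simp only [if_pos hp]
        omega
      · simp only [if_neg hp]
        rw [h3 p (by omega)]
    · rintro ⟨g, ⟨h1, h2, h3⟩, h4⟩
      apply Subtype.ext
      funext p
      by_cases hp : p < n
      · simp only [if_pos hp]
        omega
      · simp only [if_neg hp]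
        rw [h3 p (by omega)]
        omega
  · have : IsEmpty {f : ℕ → ℕ // BP c n f ∧ ∑ p ∈ range n, f p = N} := by
      constructor
      rintro ⟨f, ⟨h1, h2, h3⟩, h4⟩
      have hle : ∑ p ∈ range n, 2 * c ≤ ∑ p ∈ range n, f p :=
        Finset.sum_le_sum (fun p hp => (h2 p (mem_range.mp hp)).2)
      simp only [Finset.sum_const, card_range, smul_eq_mul, h4] at hle
      rw [mul_comm] at hle
      exact h hle
    rw [bcount, Nat.card_of_isEmpty]

lemma bcount_zero (N : ℕ) : bcount 0 0 N = if N = 0 then 1 else 0 := by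
  split_ifs with h
  · subst h
    rw [bcount]
    have : Unique {f : ℕ → ℕ // BP 0 0 f ∧ ∑ p ∈ range 0, f p = 0} := by
      refine ⟨⟨⟨fun _ => 0, ⟨fun p hp => by omega, fun p hp => by omega,
        fun p _ => rfl⟩, by simp⟩⟩, ?_⟩
      rintro ⟨f, ⟨h1, h2, h3⟩, h4⟩
      apply Subtype.ext
      funext p
      exact h3 p (Nat.zero_le p)
    exact Nat.card_unique
  · have : IsEmpty {f : ℕ → ℕ // BP 0 0 f ∧ ∑ p ∈ range 0, f p = N} := by
      constructor
      rintro ⟨f, _, h4⟩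
      simp at h4
      exact h (h4.symm)
    rw [bcount, Nat.card_of_isEmpty]

lemma bcount_succ (n N : ℕ) :
    bcount 0 (n + 1) N = bcount 0 n N + bcount 1 (n + 1) N := by
  classical
  have hfin := bfinite 0 (n + 1) N
  rw [bcount, ← Nat.card_congr
    (Equiv.sumCompl (fun f : {f : ℕ → ℕ // BP 0 (n+1) f ∧ ∑ p ∈ range (n+1), f p = N} =>
      f.1 n = 0))]
  rw [Nat.card_sum]
  congr 1
  · have e1 := Equiv.subtypeSubtypeEquivSubtypeInter
      (fun f : ℕ → ℕ => BP 0 (n+1) f ∧ ∑ p ∈ range (n+1), f p = N) (fun f => f n = 0)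
    refine Nat.card_congr (e1.trans (Equiv.subtypeEquivRight ?_))
    intro f
    constructor
    · rintro ⟨⟨⟨h1, h2, h3⟩, h4⟩, h5⟩
      refine ⟨⟨fun p hp => h1 p (by omega), fun p hp => h2 p (by omega), fun p hp => ?_⟩, ?_⟩
      · rcases Nat.eq_or_lt_of_le hp with hq | hq
        · rw [← hq]; exact h5
        · exact h3 p hq
      · rw [Finset.sum_range_succ, h5, add_zero] at h4
        exact h4
    · rintro ⟨⟨h1, h2, h3⟩, h4⟩
      have h5 : f n = 0 := h3 n le_rfl
      refine ⟨⟨⟨fun p hp => ?_, fun p hp => ?_, fun p hp => h3 p (by omega)⟩, ?_⟩, h5⟩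
      · rcases Nat.lt_or_ge (p + 1) n with hq | hq
        · exact h1 p hq
        · have : p + 1 = n := by omega
          rw [this, h5]
          exact Nat.zero_le _
      · rcases Nat.lt_or_ge p n with hq | hq
        · exact h2 p hq
        · have : p = n := by omega
          rw [this, h5]
          exact ⟨Even.zero, by omega⟩
      · rw [Finset.sum_range_succ, h5, add_zero]
        exact h4
  · have e1 := Equiv.subtypeSubtypeEquivSubtypeInter
      (fun f : ℕ → ℕ => BP 0 (n+1) f ∧ ∑ p ∈ range (n+1), f p = N) (fun f => ¬ f n = 0)
    refine Nat.card_congr (e1.trans (Equiv.subtypeEquivRight ?_))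
    intro f
    constructor
    · rintro ⟨⟨⟨h1, h2, h3⟩, h4⟩, h5⟩
      refine ⟨⟨h1, fun p hp => ?_, h3⟩, h4⟩
      refine ⟨(h2 p hp).1, ?_⟩
      have hfn : f n ≤ f p := BP.anti ⟨h1, h2, h3⟩ p n (by omega) (by omega)
      have hev := (h2 n (by omega)).1
      rw [Nat.even_iff] at hev
      omega
    · rintro ⟨⟨h1, h2, h3⟩, h4⟩
      refine ⟨⟨⟨h1, fun p hp => ⟨(h2 p hp).1, by omega⟩, h3⟩, h4⟩, ?_⟩
      have := (h2 n (by omega)).2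
      omega

noncomputable def Fb (c n : ℕ) : PowerSeries ℚ :=
  PowerSeries.mk fun N => (bcount c n N : ℚ)

lemma Fb_shift (c n : ℕ) : Fb c n = X ^ (2 * c * n) * Fb 0 n := by
  ext N
  rw [mul_comm, Fb, coeff_mk, PowerSeries.coeff_mul_X_pow']
  rw [bcount_shift c n N]
  split_ifs with h
  · rw [Fb, coeff_mk]
  · simp

lemma Fb_rec (n : ℕ) : Fb 0 (n + 1) = Fb 0 n + X ^ (2 * n + 2) * Fb 0 (n + 1) := by
  have hcomm : (X : PowerSeries ℚ) ^ (2*n+2) * Fb 0 (n+1) = Fb 0 (n+1) * X ^ (2*n+2) :=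
    mul_comm _ _
  ext N
  rw [map_add, hcomm, PowerSeries.coeff_mul_X_pow']
  simp only [Fb, coeff_mk]
  rw [bcount_succ n N, bcount_shift 1 (n + 1) N]
  have he : 2 * 1 * (n + 1) = 2 * n + 2 := by ring
  rw [he]
  split_ifs with h <;> push_cast <;> ring

lemma constantCoeff_poch2 (n : ℕ) : PowerSeries.constantCoeff (poch2 n) = 1 := by
  rw [poch2, map_prod]
  apply Finset.prod_eq_one
  intro i _
  rw [map_sub, map_one, map_pow, PowerSeries.constantCoeff_X]
  simp

lemma Fb_zero_mul_poch2 (n : ℕ) : Fb 0 n * poch2 n = 1 := by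
  induction n with
  | zero =>
    rw [poch2]
    simp only [range_zero, Finset.prod_empty, mul_one]
    ext N
    rw [Fb, coeff_mk, bcount_zero, PowerSeries.coeff_one]
    split_ifs <;> simp
  | succ n ih =>
    have hp : poch2 (n + 1) = poch2 n * (1 - X ^ (2 * n + 2)) := by
      rw [poch2, poch2, Finset.prod_range_succ]
    have key : Fb 0 (n + 1) * (1 - X ^ (2 * n + 2)) = Fb 0 n := by
      have := Fb_rec n
      linear_combination this
    rw [hp, show Fb 0 (n+1) * (poch2 n * (1 - X ^ (2*n+2)))
        = (Fb 0 (n+1) * (1 - X ^ (2*n+2))) * poch2 n by ring, key, ih]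

lemma Fb_mul_poch2 (c n : ℕ) : Fb c n * poch2 n = X ^ (2 * c * n) := by
  rw [Fb_shift, mul_assoc, Fb_zero_mul_poch2, mul_one]

lemma Fb_eq (c n : ℕ) : Fb c n = X ^ (2 * c * n) * (poch2 n)⁻¹ := by
  have hu : poch2 n * (poch2 n)⁻¹ = 1 :=
    PowerSeries.mul_inv_cancel _ (by rw [constantCoeff_poch2]; norm_num)
  calc Fb c n = Fb c n * (poch2 n * (poch2 n)⁻¹) := by rw [hu, mul_one]
    _ = (Fb c n * poch2 n) * (poch2 n)⁻¹ := by ring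
    _ = X ^ (2 * c * n) * (poch2 n)⁻¹ := by rw [Fb_mul_poch2]

noncomputable def tcount (c r : ℕ → ℕ) (S : Finset ℕ) (n : ℕ) : ℕ :=
  Nat.card {g : ℕ → ℕ → ℕ //
    (∀ m ∈ S, BP (c m) (r m) (g m)) ∧ (∀ m ∉ S, g m = fun _ => 0) ∧
    ∑ m ∈ S, ∑ p ∈ range (r m), g m p = n}

lemma tfinite (c r : ℕ → ℕ) (S : Finset ℕ) (n : ℕ) :
    Finite {g : ℕ → ℕ → ℕ //
      (∀ m ∈ S, BP (c m) (r m) (g m)) ∧ (∀ m ∉ S, g m = fun _ => 0) ∧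
      ∑ m ∈ S, ∑ p ∈ range (r m), g m p = n} := by
  classical
  have hb : ∀ g : {g : ℕ → ℕ → ℕ //
      (∀ m ∈ S, BP (c m) (r m) (g m)) ∧ (∀ m ∉ S, g m = fun _ => 0) ∧
      ∑ m ∈ S, ∑ p ∈ range (r m), g m p = n}, ∀ m ∈ S, ∀ p, g.1 m p ≤ n := by
    rintro ⟨g, hg1, hg2, hg3⟩ m hm p
    show g m p ≤ n
    by_cases hp : p < r m
    · calc g m p ≤ ∑ p ∈ range (r m), g m p :=
            Finset.single_le_sum (fun _ _ => Nat.zero_le _) (mem_range.mpr hp)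
        _ ≤ ∑ m ∈ S, ∑ p ∈ range (r m), g m p :=
            Finset.single_le_sum (f := fun m => ∑ p ∈ range (r m), g m p)
              (fun _ _ => Nat.zero_le _) hm
        _ = n := hg3
    · rw [(hg1 m hm).2.2 p (by omega)]
      exact Nat.zero_le _
  apply Finite.of_injective (fun g => fun (m : {x // x ∈ S}) (i : Fin (S.sup r)) =>
    (⟨g.1 m.1 i.1, Nat.lt_succ_of_le (hb g m.1 m.2 i.1)⟩ : Fin (n + 1)))
  intro g h heq
  apply Subtype.ext
  funext m p
  by_cases hm : m ∈ S
  · by_cases hp : p < r m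
    · have hps : p < S.sup r := lt_of_lt_of_le hp (Finset.le_sup hm)
      exact congrArg Fin.val (congrFun (congrFun heq ⟨m, hm⟩) ⟨p, hps⟩)
    · rw [(g.2.1 m hm).2.2 p (by omega), (h.2.1 m hm).2.2 p (by omega)]
  · rw [g.2.2.1 m hm, h.2.2.1 m hm]

lemma tcount_empty (c r : ℕ → ℕ) (n : ℕ) :
    tcount c r ∅ n = if n = 0 then 1 else 0 := by
  split_ifs with h
  · subst h
    rw [tcount]
    have : Unique {g : ℕ → ℕ → ℕ //
        (∀ m ∈ (∅ : Finset ℕ), BP (c m) (r m) (g m)) ∧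
        (∀ m ∉ (∅ : Finset ℕ), g m = fun _ => 0) ∧
        ∑ m ∈ (∅ : Finset ℕ), ∑ p ∈ range (r m), g m p = 0} := by
      refine ⟨⟨⟨fun _ _ => 0, by simp, fun m _ => rfl, by simp⟩⟩, ?_⟩
      rintro ⟨g, h1, h2, h3⟩
      apply Subtype.ext
      funext m
      exact h2 m (notMem_empty m)
    exact Nat.card_unique
  · have : IsEmpty {g : ℕ → ℕ → ℕ //
        (∀ m ∈ (∅ : Finset ℕ), BP (c m) (r m) (g m)) ∧
        (∀ m ∉ (∅ : Finset ℕ), g m = fun _ => 0) ∧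
        ∑ m ∈ (∅ : Finset ℕ), ∑ p ∈ range (r m), g m p = n} := by
      constructor
      rintro ⟨g, h1, h2, h3⟩
      simp at h3
      exact h h3.symm
    rw [tcount, Nat.card_of_isEmpty]

lemma tcount_insert (c r : ℕ → ℕ) {a : ℕ} {S : Finset ℕ} (ha : a ∉ S) (n : ℕ) :
    tcount c r (insert a S) n =
      ∑ q ∈ antidiagonal n, bcount (c a) (r a) q.1 * tcount c r S q.2 := by
  classical
  set A := {g : ℕ → ℕ → ℕ //
    (∀ m ∈ insert a S, BP (c m) (r m) (g m)) ∧ (∀ m ∉ insert a S, g m = fun _ => 0) ∧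
    ∑ m ∈ insert a S, ∑ p ∈ range (r m), g m p = n} with hA
  haveI : Finite A := tfinite c r (insert a S) n
  haveI : Fintype A := Fintype.ofFinite A
  set key : A → ℕ × ℕ :=
    fun g => (∑ p ∈ range (r a), g.1 a p, ∑ m ∈ S, ∑ p ∈ range (r m), g.1 m p) with hkeydef
  have hkey : ∀ g : A, key g ∈ antidiagonal n := by
    intro g
    rw [HasAntidiagonal.mem_antidiagonal]
    have := g.2.2.2
    rw [Finset.sum_insert ha] at this
    exact this
  have step1 : tcount c r (insert a S) n = (Finset.univ : Finset A).card := by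
    rw [tcount, Nat.card_eq_fintype_card, Finset.card_univ]
  rw [step1, Finset.card_eq_sum_card_fiberwise (fun g _ => hkey g)]
  refine Finset.sum_congr rfl fun q hq => ?_
  haveI : Finite {g : A // key g = q} := Subtype.finite
  haveI : Fintype {g : A // key g = q} := Fintype.ofFinite _
  have fibEquiv : {g : A // key g = q} ≃
      ({f : ℕ → ℕ // BP (c a) (r a) f ∧ ∑ p ∈ range (r a), f p = q.1} ×
       {g : ℕ → ℕ → ℕ //
         (∀ m ∈ S, BP (c m) (r m) (g m)) ∧ (∀ m ∉ S, g m = fun _ => 0) ∧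
         ∑ m ∈ S, ∑ p ∈ range (r m), g m p = q.2}) := by
    refine
      { toFun := fun gg =>
          (⟨gg.1.1 a, gg.1.2.1 a (mem_insert_self a S), ?_⟩,
           ⟨fun m => if m = a then (fun _ => 0) else gg.1.1 m, ?_, ?_, ?_⟩)
        invFun := fun z =>
          ⟨⟨fun m => if m = a then (z.1 : ℕ → ℕ) else (z.2 : ℕ → ℕ → ℕ) m, ?_, ?_, ?_⟩, ?_⟩
        left_inv := ?_
        right_inv := ?_ }
    · exact congrArg Prod.fst gg.2
    · intro m hm
      simp only [if_neg (ne_of_mem_of_not_mem hm ha)]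
      exact gg.1.2.1 m (mem_insert_of_mem hm)
    · intro m hm
      by_cases hma : m = a
      · simp only [hma, if_pos]
      · simp only [if_neg hma]
        exact gg.1.2.2.1 m (by simp [hma, hm])
    · refine Eq.trans (Finset.sum_congr rfl fun m hm =>
        Finset.sum_congr rfl fun p _ => ?_) (congrArg Prod.snd gg.2)
      simp only [if_neg (ne_of_mem_of_not_mem hm ha)]
    · intro m hm
      rcases mem_insert.mp hm with hma | hms
      · subst hma
        simp only [eq_self_iff_true, if_true]
        exact z.1.2.1
      · simp only [if_neg (ne_of_mem_of_not_mem hms ha)]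
        exact z.2.2.1 m hms
    · intro m hm
      rw [mem_insert, not_or] at hm
      simp only [if_neg hm.1]
      exact z.2.2.2.1 m hm.2
    · rw [Finset.sum_insert ha]
      have h1 : (∑ p ∈ range (r a),
          (fun m => if m = a then (z.1 : ℕ → ℕ) else (z.2 : ℕ → ℕ → ℕ) m) a p) = q.1 :=
        Eq.trans (Finset.sum_congr rfl fun p _ => by
          simp only [eq_self_iff_true, if_true]) z.1.2.2
      have h2 : (∑ m ∈ S, ∑ p ∈ range (r m),
          (fun m => if m = a then (z.1 : ℕ → ℕ) else (z.2 : ℕ → ℕ → ℕ) m) m p) = q.2 :=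
        Eq.trans (Finset.sum_congr rfl fun m hm => Finset.sum_congr rfl fun p _ => by
          simp only [if_neg (ne_of_mem_of_not_mem hm ha)]) z.2.2.2.2
      rw [h1, h2]
      exact HasAntidiagonal.mem_antidiagonal.mp hq
    · refine Prod.ext ?_ ?_
      · show (∑ p ∈ range (r a),
            (fun m => if m = a then (z.1 : ℕ → ℕ) else (z.2 : ℕ → ℕ → ℕ) m) a p) = q.1
        refine Eq.trans (Finset.sum_congr rfl fun p _ => ?_) z.1.2.2
        simp only [eq_self_iff_true, if_true]
      · show (∑ m ∈ S, ∑ p ∈ range (r m),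
            (fun m => if m = a then (z.1 : ℕ → ℕ) else (z.2 : ℕ → ℕ → ℕ) m) m p) = q.2
        refine Eq.trans (Finset.sum_congr rfl fun m hm =>
          Finset.sum_congr rfl fun p _ => ?_) z.2.2.2.2
        simp only [if_neg (ne_of_mem_of_not_mem hm ha)]
    · rintro ⟨⟨g, hg⟩, hgq⟩
      apply Subtype.ext
      apply Subtype.ext
      funext m
      by_cases hma : m = a
      · subst hma
        simp only [eq_self_iff_true, if_true]
      · simp only [if_neg hma]
    · rintro ⟨⟨f, hf⟩, ⟨h, hh⟩⟩
      refine Prod.ext (Subtype.ext ?_) (Subtype.ext ?_)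
      · show (fun m => if m = a then f else h m) a = f
        simp only [eq_self_iff_true, if_true]
      · show (fun m => if m = a then (fun _ : ℕ => 0) else
            (fun m => if m = a then f else h m) m) = h
        funext m
        by_cases hma : m = a
        · subst hma
          simp only [eq_self_iff_true, if_true]
          exact (hh.2.1 m ha).symm
        · simp only [if_neg hma]
  calc ((Finset.univ : Finset A).filter fun g => key g = q).card
      = Fintype.card {g : A // key g = q} :=
        (Fintype.card_of_subtype _ (fun x => by simp)).symm
    _ = Nat.card {g : A // key g = q} := Nat.card_eq_fintype_card.symm
    _ = bcount (c a) (r a) q.1 * tcount c r S q.2 := by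
        rw [Nat.card_congr fibEquiv, Nat.card_prod, bcount, tcount]

lemma tuple_gf (c r : ℕ → ℕ) (S : Finset ℕ) :
    PowerSeries.mk (fun n => (tcount c r S n : ℚ)) = ∏ t ∈ S, Fb (c t) (r t) := by
  classical
  induction S using Finset.induction_on with
  | empty =>
    ext N
    rw [coeff_mk, tcount_empty, Finset.prod_empty, PowerSeries.coeff_one]
    split_ifs <;> simp
  | @insert a S ha ih =>
    rw [Finset.prod_insert ha, ← ih]
    ext N
    rw [coeff_mk, PowerSeries.coeff_mul, tcount_insert c r ha N]
    push_cast
    refine Finset.sum_congr rfl fun q hq => ?_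
    rw [Fb, coeff_mk, coeff_mk]

lemma abel_gen (C σ : ℕ → ℤ) (k : ℕ) :
    ∑ t ∈ Icc 1 k, C t * (σ t - σ (t + 1))
      = ∑ t ∈ Icc 1 k, (C t - C (t - 1)) * σ t + C 0 * σ 1 - C k * σ (k + 1) := by
  induction k with
  | zero => simp
  | succ n ih =>
    rw [Finset.sum_Icc_succ_top (by omega : 1 ≤ n + 1),
      Finset.sum_Icc_succ_top (by omega : 1 ≤ n + 1), ih]
    simp only [Nat.add_sub_cancel]
    ring

lemma abel_sum (k : ℕ) (C σ : ℕ → ℤ) (hC : C 0 = 0) (hσ : σ (k + 1) = 0) :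
    ∑ t ∈ Icc 1 k, C t * (σ t - σ (t + 1)) = ∑ t ∈ Icc 1 k, (C t - C (t - 1)) * σ t := by
  rw [abel_gen C σ k, hC, hσ]
  ring

lemma Esplit (a b k : ℕ) (hab : 2 * a + 2 * b ≤ k) (s : ℕ → ℕ) :
    2 * ∑ t ∈ (Icc 1 (2*a)).filter (fun t => Odd t), s t
      + 2 * ∑ t ∈ Icc (2*a+1) (k-2*b), s t
      + ∑ t ∈ Icc (k-2*b+1) k, (if Odd (t - (k-2*b)) then 4 else 2) * s t
    = ∑ t ∈ Icc 1 k, (if t ≤ 2*a then (if Odd t then 2 else 0)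
        else if t ≤ k-2*b then 2 else (if Odd (t - (k-2*b)) then 4 else 2)) * s t := by
  have h2a : 2*a ≤ k - 2*b := by omega
  have hkb : k - 2*b ≤ k := by omega
  have hA : 2 * ∑ t ∈ (Icc 1 (2*a)).filter (fun t => Odd t), s t
      = ∑ t ∈ Ioc 0 (2*a), (if t ≤ 2*a then (if Odd t then 2 else 0)
        else if t ≤ k-2*b then 2 else (if Odd (t - (k-2*b)) then 4 else 2)) * s t := by
    rw [Finset.mul_sum, Finset.sum_filter,
      show Ioc 0 (2*a) = Icc 1 (2*a) from (Finset.Icc_add_one_left_eq_Ioc 0 (2*a)).symm]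
    refine Finset.sum_congr rfl fun t ht => ?_
    rw [mem_Icc] at ht
    rw [if_pos ht.2]
    split_ifs <;> ring
  have hB : 2 * ∑ t ∈ Icc (2*a+1) (k-2*b), s t
      = ∑ t ∈ Ioc (2*a) (k-2*b), (if t ≤ 2*a then (if Odd t then 2 else 0)
        else if t ≤ k-2*b then 2 else (if Odd (t - (k-2*b)) then 4 else 2)) * s t := by
    rw [Finset.mul_sum,
      show Ioc (2*a) (k-2*b) = Icc (2*a+1) (k-2*b) from (Finset.Icc_add_one_left_eq_Ioc _ _).symm]
    refine Finset.sum_congr rfl fun t ht => ?_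
    rw [mem_Icc] at ht
    rw [if_neg (show ¬ t ≤ 2*a by omega), if_pos ht.2]
  have hC : ∑ t ∈ Icc (k-2*b+1) k, (if Odd (t - (k-2*b)) then 4 else 2) * s t
      = ∑ t ∈ Ioc (k-2*b) k, (if t ≤ 2*a then (if Odd t then 2 else 0)
        else if t ≤ k-2*b then 2 else (if Odd (t - (k-2*b)) then 4 else 2)) * s t := by
    rw [show Ioc (k-2*b) k = Icc (k-2*b+1) k from (Finset.Icc_add_one_left_eq_Ioc _ _).symm]
    refine Finset.sum_congr rfl fun t ht => ?_
    rw [mem_Icc] at ht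
    rw [if_neg (show ¬ t ≤ 2*a by omega), if_neg (show ¬ t ≤ k - 2*b by omega)]
  rw [hA, hB, hC, show Icc 1 k = Ioc 0 k from Finset.Icc_add_one_left_eq_Ioc 0 k,
    ← Finset.sum_Ioc_consecutive _ (Nat.zero_le (k-2*b)) hkb,
    ← Finset.sum_Ioc_consecutive _ (Nat.zero_le (2*a)) h2a]

lemma exponent_eq (a b k : ℕ) (hk : 1 ≤ k) (hab : 2 * a + 2 * b ≤ k) (s : ℕ → ℕ)
    (hdec : ∀ m, 1 ≤ m → m ≤ k → s (m+1) ≤ s m) (hsk : s (k+1) = 0) :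
    ∑ t ∈ Icc 1 k, 2 * ((t + (t - 2*a) + (t - (k - 2*b)) + 1) / 2) * (s t - s (t+1))
      = 2 * ∑ t ∈ (Icc 1 (2*a)).filter (fun t => Odd t), s t
        + 2 * ∑ t ∈ Icc (2*a+1) (k-2*b), s t
        + ∑ t ∈ Icc (k-2*b+1) k, (if Odd (t - (k-2*b)) then 4 else 2) * s t := by
  have hint : ((∑ t ∈ Icc 1 k,
      2 * ((t + (t - 2*a) + (t - (k - 2*b)) + 1) / 2) * (s t - s (t+1)) : ℕ) : ℤ)
      = ((∑ t ∈ Icc 1 k, (if t ≤ 2*a then (if Odd t then 2 else 0)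
          else if t ≤ k-2*b then 2 else (if Odd (t - (k-2*b)) then 4 else 2)) * s t : ℕ) : ℤ) := by
    rw [Nat.cast_sum, Nat.cast_sum]
    have hL : ∀ t ∈ Icc 1 k,
        ((2 * ((t + (t - 2*a) + (t - (k - 2*b)) + 1) / 2) * (s t - s (t+1)) : ℕ) : ℤ)
          = ((2 * ((t + (t - 2*a) + (t - (k - 2*b)) + 1) / 2) : ℕ) : ℤ)
              * ((s t : ℤ) - (s (t+1) : ℤ)) := by
      intro t ht
      rw [mem_Icc] at ht
      have := hdec t ht.1 ht.2
      rw [Nat.cast_mul, Nat.cast_sub this]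
    rw [Finset.sum_congr rfl hL,
      abel_sum k (fun t => ((2 * ((t + (t - 2*a) + (t - (k - 2*b)) + 1) / 2) : ℕ) : ℤ))
        (fun t => (s t : ℤ)) (by norm_num)
        (show ((s (k+1) : ℕ) : ℤ) = 0 by exact_mod_cast hsk)]
    refine Finset.sum_congr rfl fun t ht => ?_
    rw [mem_Icc] at ht
    have hw : ((2 * ((t + (t - 2*a) + (t - (k - 2*b)) + 1) / 2) : ℕ) : ℤ)
        - ((2 * ((t - 1 + (t - 1 - 2*a) + (t - 1 - (k - 2*b)) + 1) / 2) : ℕ) : ℤ)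
        = ((if t ≤ 2*a then (if Odd t then 2 else 0) else if t ≤ k-2*b then 2
            else (if Odd (t - (k-2*b)) then 4 else 2) : ℕ) : ℤ) := by
      simp only [Nat.odd_iff]
      split_ifs <;> push_cast <;> omega
    conv_rhs => rw [Nat.cast_mul]
    rw [← hw]
  have := Esplit a b k hab s
  omega

lemma min_iff (a b k m : ℕ) (hab : 2*a + 2*b ≤ k) (L : ℕ) (hL : Even L) :
    ((m:ℤ) + max ((m:ℤ) - 2*a) 0 + max ((m:ℤ) - ((k:ℤ) - 2*b)) 0 ≤ (L:ℤ))
      ↔ 2 * ((m + (m - 2*a) + (m - (k - 2*b)) + 1) / 2) ≤ L := by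
  have h1 : max ((m:ℤ) - 2*(a:ℤ)) 0 = ((m - 2*a : ℕ) : ℤ) := by
    rcases le_total ((m:ℤ) - 2*(a:ℤ)) 0 with h | h
    · rw [max_eq_right h]; omega
    · rw [max_eq_left h]; omega
  have h2 : max ((m:ℤ) - ((k:ℤ) - 2*(b:ℤ))) 0 = ((m - (k - 2*b) : ℕ) : ℤ) := by
    rcases le_total ((m:ℤ) - ((k:ℤ) - 2*(b:ℤ))) 0 with h | h
    · rw [max_eq_right h]; omega
    · rw [max_eq_left h]; omega
  rw [h1, h2]
  rw [Nat.even_iff] at hL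
  omega

end Stmt12Aux

/-- For `2a + 2b ≤ k` and fixed `s₁ ≥ ⋯ ≥ s_k ≥ 0` (with `s_{k+1} = 0`), the generating
function for `k`-tuples of partitions `(λ⁽¹⁾,…,λ⁽ᵏ⁾)` — `λ⁽ᵐ⁾` having exactly
`s_m - s_{m+1}` parts, all even, each at least `m + max{m-2a,0} + max{m-(k-2b),0}` —
equals `q^{2(s₁+s₃+⋯+s_{2a-1}) + 2(s_{2a+1}+⋯+s_{k-2b}) + (4s_{k-2b+1}+2s_{k-2b+2}+⋯+4s_{k-1}+2s_k)}`
divided by `(q²;q²)_{s₁-s₂} ⋯ (q²;q²)_{s_k}`; in the last group the coefficient of `s_t`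
is `4` if `t - (k-2b)` is odd and `2` if it is even. -/
theorem stmt12 (a b k : ℕ) (hk : 1 ≤ k) (hab : 2*a + 2*b ≤ k) (s : ℕ → ℕ)
    (hdec : ∀ m, 1 ≤ m → m ≤ k → s (m+1) ≤ s m) (hsk : s (k+1) = 0) :
    PowerSeries.mk (fun n =>
      (Nat.card {lam : ℕ → ℕ → ℕ //
        (∀ m ∈ Finset.Icc 1 k, ∀ p, p + 1 < s m - s (m+1) → lam m (p+1) ≤ lam m p) ∧
        (∀ m ∈ Finset.Icc 1 k, ∀ p, p < s m - s (m+1) →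
          Even (lam m p) ∧
          (m : ℤ) + max ((m : ℤ) - 2*a) 0 + max ((m : ℤ) - ((k : ℤ) - 2*b)) 0 ≤ lam m p) ∧
        (∀ m p, (m ∉ Finset.Icc 1 k ∨ s m - s (m+1) ≤ p) → lam m p = 0) ∧
        (∑ m ∈ Finset.Icc 1 k, ∑ p ∈ Finset.range (s m - s (m+1)), lam m p) = n} : ℚ))
    = (PowerSeries.X : PowerSeries ℚ) ^
        (2 * ∑ t ∈ (Finset.Icc 1 (2*a)).filter (fun t => Odd t), s t
          + 2 * ∑ t ∈ Finset.Icc (2*a+1) (k-2*b), s t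
          + ∑ t ∈ Finset.Icc (k-2*b+1) k, (if Odd (t - (k-2*b)) then 4 else 2) * s t)
      * ∏ t ∈ Finset.Icc 1 k, (poch2 (s t - s (t+1)))⁻¹ := by
  classical
  have hcard : ∀ n : ℕ, Nat.card {lam : ℕ → ℕ → ℕ //
        (∀ m ∈ Finset.Icc 1 k, ∀ p, p + 1 < s m - s (m+1) → lam m (p+1) ≤ lam m p) ∧
        (∀ m ∈ Finset.Icc 1 k, ∀ p, p < s m - s (m+1) →
          Even (lam m p) ∧
          (m : ℤ) + max ((m : ℤ) - 2*a) 0 + max ((m : ℤ) - ((k : ℤ) - 2*b)) 0 ≤ lam m p) ∧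
        (∀ m p, (m ∉ Finset.Icc 1 k ∨ s m - s (m+1) ≤ p) → lam m p = 0) ∧
        (∑ m ∈ Finset.Icc 1 k, ∑ p ∈ Finset.range (s m - s (m+1)), lam m p) = n}
      = Stmt12Aux.tcount (fun t => (t + (t - 2*a) + (t - (k - 2*b)) + 1) / 2)
          (fun t => s t - s (t+1)) (Finset.Icc 1 k) n := by
    intro n
    rw [Stmt12Aux.tcount]
    refine Nat.card_congr (Equiv.subtypeEquivRight ?_)
    intro lam
    constructor
    · rintro ⟨O1, O2, O3, O4⟩
      refine ⟨fun m hm => ⟨O1 m hm, fun p hp => ?_, fun p hp => O3 m p (Or.inr hp)⟩,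
        fun m hm => funext fun p => O3 m p (Or.inl hm), O4⟩
      obtain ⟨he, hge⟩ := O2 m hm p hp
      exact ⟨he, (Stmt12Aux.min_iff a b k m hab _ he).mp hge⟩
    · rintro ⟨B1, B2, B4⟩
      refine ⟨fun m hm p hp => (B1 m hm).1 p hp, fun m hm p hp => ?_, fun m p h => ?_, B4⟩
      · obtain ⟨he, hge⟩ := (B1 m hm).2.1 p hp
        exact ⟨he, (Stmt12Aux.min_iff a b k m hab _ he).mpr hge⟩
      · rcases h with hm | hp
        · exact congrFun (B2 m hm) p
        · by_cases hm2 : m ∈ Finset.Icc 1 k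
          · exact (B1 m hm2).2.2 p hp
          · exact congrFun (B2 m hm2) p
  have hmk : (PowerSeries.mk (fun n =>
      (Nat.card {lam : ℕ → ℕ → ℕ //
        (∀ m ∈ Finset.Icc 1 k, ∀ p, p + 1 < s m - s (m+1) → lam m (p+1) ≤ lam m p) ∧
        (∀ m ∈ Finset.Icc 1 k, ∀ p, p < s m - s (m+1) →
          Even (lam m p) ∧
          (m : ℤ) + max ((m : ℤ) - 2*a) 0 + max ((m : ℤ) - ((k : ℤ) - 2*b)) 0 ≤ lam m p) ∧
        (∀ m p, (m ∉ Finset.Icc 1 k ∨ s m - s (m+1) ≤ p) → lam m p = 0) ∧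
        (∑ m ∈ Finset.Icc 1 k, ∑ p ∈ Finset.range (s m - s (m+1)), lam m p) = n} : ℚ)))
      = PowerSeries.mk (fun n =>
          (Stmt12Aux.tcount (fun t => (t + (t - 2*a) + (t - (k - 2*b)) + 1) / 2)
            (fun t => s t - s (t+1)) (Finset.Icc 1 k) n : ℚ)) := by
    ext n
    rw [PowerSeries.coeff_mk, PowerSeries.coeff_mk, hcard n]
  rw [hmk, Stmt12Aux.tuple_gf]
  have hprod : ∏ t ∈ Finset.Icc 1 k,
      Stmt12Aux.Fb ((t + (t - 2*a) + (t - (k - 2*b)) + 1) / 2) (s t - s (t+1))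
      = (PowerSeries.X : PowerSeries ℚ) ^
          (∑ t ∈ Finset.Icc 1 k,
            2 * ((t + (t - 2*a) + (t - (k - 2*b)) + 1) / 2) * (s t - s (t+1)))
        * ∏ t ∈ Finset.Icc 1 k, (poch2 (s t - s (t+1)))⁻¹ := by
    rw [Finset.prod_congr rfl (fun t _ =>
      Stmt12Aux.Fb_eq ((t + (t - 2*a) + (t - (k - 2*b)) + 1) / 2) (s t - s (t+1))),
      Finset.prod_mul_distrib, Finset.prod_pow_eq_pow_sum]
  rw [hprod, Stmt12Aux.exponent_eq a b k hk hab s hdec hsk]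
end

section
/- Suppose that, for each pair of integers (k, c) with 0 ≤ c ≤ k, the formal power series identity Σ_{f ∈ W̄_{k,c}} q^{|f|} = (-q²;q²)_∞ (q^{2⌊(c+2)/2⌋}, q^{2k+4-2⌊(c+2)/2⌋}, q^{2k+4}; q^{2k+4})_∞ / (q²;q²)_∞ holds, where W̄_{k,c} is the set of frequency sequences f : ℤ_{>0} → ℕ with finite support satisfying f_i + f_{i+1} ≤ k for all i ≥ 1, f_1 ≤ c, and f_i even for all odd i. Then for non-negative integers j, r, k with j + r ≤ k, the generating function for the set Y^o_{j,r,k} of frequency sequences f : ℤ_{≥0} → ℕ with finite support satisfying f_i + f_{i+1} ≤ k for all i ≥ 0, f_0 ∈ {ℓ + max{ℓ-(j-r), 0} : 0 ≤ ℓ ≤ j}, and f_i even for all odd i, equals Σ_{s=0}^{j} (-q²;q²)_∞ (q^{2⌊(k+2-r+j-2s)/2⌋}, q^{2k+4-2⌊(k+2-r+j-2s)/2⌋}, q^{2k+4}; q^{2k+4})_∞ / (q²;q²)_∞. -/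
/-- `(q^a; q^r)_∞ = ∏_{i ≥ 0} (1 - q^{a + r i})` as a formal power series (for
`a, r ≥ 1` the `n`-th coefficient of the infinite product is that of the truncated
product over `i < n + 1`, which has stabilised). -/
noncomputable def qpochM (a r : ℕ) : PowerSeries ℚ :=
  PowerSeries.mk fun n => PowerSeries.coeff (R := ℚ) n
    (∏ i ∈ Finset.range (n+1), (1 - (PowerSeries.X : PowerSeries ℚ) ^ (a + r*i)))

/-- `(-q^a; q^r)_∞ = ∏_{i ≥ 0} (1 + q^{a + r i})` as a formal power series. -/
noncomputable def qpochP (a r : ℕ) : PowerSeries ℚ :=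
  PowerSeries.mk fun n => PowerSeries.coeff (R := ℚ) n
    (∏ i ∈ Finset.range (n+1), (1 + (PowerSeries.X : PowerSeries ℚ) ^ (a + r*i)))

/-- `W̄_{k,c}`: frequency sequences on `ℤ_{>0}` with finite support, `f_i + f_{i+1} ≤ k`
for `i ≥ 1`, `f_1 ≤ c`, and `f_i` even for every odd `i`. -/
def WbarSet (k c : ℕ) : Set (ℤ → ℕ) :=
  {f | (Function.support f).Finite ∧ (∀ i : ℤ, i ≤ 0 → f i = 0) ∧
    (∀ i : ℤ, 1 ≤ i → f i + f (i+1) ≤ k) ∧ f 1 ≤ c ∧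
    ∀ i : ℤ, Odd i → Even (f i)}

/-- `Y^o_{j,r,k}`: frequency sequences on `ℤ_{≥0}` with finite support,
`f_i + f_{i+1} ≤ k` for `i ≥ 0`, `f_0 ∈ {ℓ + max{ℓ-(j-r),0} : 0 ≤ ℓ ≤ j}`, and `f_i`
even for every odd `i`. -/
def YoSet (j r k : ℕ) : Set (ℤ → ℕ) :=
  {f | (Function.support f).Finite ∧ (∀ i : ℤ, i < 0 → f i = 0) ∧
    (∀ i : ℤ, 0 ≤ i → f i + f (i+1) ≤ k) ∧
    (∃ l : ℕ, l ≤ j ∧ (f 0 : ℤ) = (l : ℤ) + max ((l : ℤ) - ((j : ℤ) - (r : ℤ))) 0) ∧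
    ∀ i : ℤ, Odd i → Even (f i)}

/-- The product side `(-q²;q²)_∞ (q^e, q^{2k+4-e}, q^{2k+4}; q^{2k+4})_∞ / (q²;q²)_∞`. -/
noncomputable def prodSide (k e : ℕ) : PowerSeries ℚ :=
  qpochP 2 2 * qpochM e (2*k+4) * qpochM (2*k+4-e) (2*k+4) * qpochM (2*k+4) (2*k+4)
    * (qpochM 2 2)⁻¹


section Aux

def cN (j r l : ℕ) : ℕ := l + (l + r - j)
def invC (j r c : ℕ) : ℕ := if c + r ≤ j then c else (c + (j - r) - (r - j)) / 2
def tauF (j r l : ℕ) : ℕ :=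
  if l ≤ j - r then (if (j - r - l) % 2 = 1 then (j - r - l - 1) / 2 else (l + (j - r)) / 2) else l
def sigF (j r s : ℕ) : ℕ :=
  if 2 * s + 1 ≤ j - r then j - r - (2 * s + 1) else if s ≤ j - r then 2 * s - (j - r) else s

lemma invC_cN (j r l : ℕ) : invC j r (cN j r l) = l := by
  unfold invC cN; split_ifs <;> omega

lemma cN_cast (j r l : ℕ) :
    ((cN j r l : ℕ) : ℤ) = (l : ℤ) + max ((l : ℤ) - ((j : ℤ) - (r : ℤ))) 0 := by
  unfold cN; omega

lemma wt_update_s15 (f : ℤ → ℕ) (c : ℕ) :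
    ∑ᶠ i : ℤ, i * ((Function.update f 0 c) i : ℤ) = ∑ᶠ i : ℤ, i * (f i : ℤ) := by
  apply finsum_congr
  intro i
  by_cases h : i = 0
  · subst h; simp
  · rw [Function.update_of_ne h]

lemma vanish (f : ℤ → ℕ) (hfin : (Function.support f).Finite)
    (hneg : ∀ i : ℤ, i < 0 → f i = 0) (n : ℕ)
    (hw : ∑ᶠ i : ℤ, i * (f i : ℤ) = (n : ℤ)) {i : ℤ} (hi : (n : ℤ) < i) : f i = 0 := by
  by_contra h
  have hsub : Function.support (fun i : ℤ => i * (f i : ℤ)) ⊆ ↑hfin.toFinset := by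
    intro x hx
    simp only [Function.mem_support] at hx
    simp only [Set.Finite.coe_toFinset, Function.mem_support]
    intro hfx
    apply hx; rw [hfx]; simp
  rw [finsum_eq_finset_sum_of_support_subset _ hsub] at hw
  have hnonneg : ∀ x ∈ hfin.toFinset, 0 ≤ x * (f x : ℤ) := by
    intro x hx
    simp only [Set.Finite.mem_toFinset, Function.mem_support] at hx
    have hx0 : 0 ≤ x := by
      by_contra hx0
      exact hx (hneg x (by omega))
    positivity
  have hmem : i ∈ hfin.toFinset := by
    simp only [Set.Finite.mem_toFinset, Function.mem_support]; exact h
  have hle := Finset.single_le_sum hnonneg hmem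
  have h1 : (1 : ℤ) ≤ (f i : ℤ) := by exact_mod_cast Nat.one_le_iff_ne_zero.2 h
  nlinarith

lemma finite_slice (k n : ℕ) (S : Set (ℤ → ℕ))
    (hS : ∀ f ∈ S, (Function.support f).Finite ∧ (∀ i : ℤ, i < 0 → f i = 0) ∧ ∀ i, f i ≤ k) :
    Finite {f : ℤ → ℕ // f ∈ S ∧ ∑ᶠ i : ℤ, i * (f i : ℤ) = (n : ℤ)} := by
  classical
  let φ : {f : ℤ → ℕ // f ∈ S ∧ ∑ᶠ i : ℤ, i * (f i : ℤ) = (n : ℤ)} →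
      (Finset.Icc (0 : ℤ) (n : ℤ) → Fin (k + 1)) := fun f i =>
    ⟨f.1 i.1, Nat.lt_succ_of_le ((hS f.1 f.2.1).2.2 i.1)⟩
  apply Finite.of_injective φ
  intro a b hab
  ext i
  obtain ⟨hfa, hnega, hba⟩ := hS a.1 a.2.1
  obtain ⟨hfb, hnegb, hbb⟩ := hS b.1 b.2.1
  rcases lt_trichotomy i 0 with hi | hi | hi
  · rw [hnega i hi, hnegb i hi]
  · subst hi
    have := congrFun hab ⟨0, by simp⟩
    exact congrArg Fin.val this
  · rcases le_or_gt i (n : ℤ) with hin | hin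
    · have := congrFun hab ⟨i, by simp [Finset.mem_Icc]; omega⟩
      exact congrArg Fin.val this
    · rw [vanish a.1 hfa hnega n a.2.2 hin, vanish b.1 hfb hnegb n b.2.2 hin]

lemma Yo_f0 {j r k : ℕ} {f : ℤ → ℕ} (hf : f ∈ YoSet j r k) :
    ∃ l : ℕ, l ≤ j ∧ f 0 = cN j r l := by
  obtain ⟨-, -, -, ⟨l, hl, hfl⟩, -⟩ := hf
  refine ⟨l, hl, ?_⟩
  have := cN_cast j r l
  omega

lemma mem_Wbar_of {j r k : ℕ} {f : ℤ → ℕ} (hf : f ∈ YoSet j r k) :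
    Function.update f 0 0 ∈ WbarSet k (k - f 0) := by
  obtain ⟨hfin, hneg, hadj, -, hodd⟩ := hf
  refine ⟨?_, ?_, ?_, ?_, ?_⟩
  · exact hfin.subset (fun x hx => by
      simp only [Function.mem_support] at hx ⊢
      intro hfx; apply hx
      by_cases hx0 : x = 0
      · subst hx0; simp
      · rwa [Function.update_of_ne hx0])
  · intro i hi
    rcases eq_or_lt_of_le hi with hi0 | hi0
    · rw [← hi0]; simp
    · rw [Function.update_of_ne (by omega)]; exact hneg i hi0
  · intro i hi
    rw [Function.update_of_ne (by omega), Function.update_of_ne (by omega)]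
    exact hadj i (by omega)
  · rw [Function.update_of_ne (by norm_num)]
    have h01 := hadj 0 le_rfl
    norm_num at h01
    omega
  · intro i hi
    have : i ≠ 0 := by rintro rfl; exact (Int.not_odd_iff_even.mpr Even.zero) hi
    rw [Function.update_of_ne this]
    exact hodd i hi

lemma mem_Yo_of {j r k : ℕ} (hjr : j + r ≤ k) {l : ℕ} (hl : l ≤ j) {g : ℤ → ℕ}
    (hg : g ∈ WbarSet k (k - cN j r l)) :
    Function.update g 0 (cN j r l) ∈ YoSet j r k := by
  obtain ⟨hfin, hz, hadj, h1, hodd⟩ := hg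
  have hck : cN j r l ≤ k := by unfold cN at *; omega
  refine ⟨?_, ?_, ?_, ⟨l, hl, ?_⟩, ?_⟩
  · apply (hfin.insert 0).subset
    intro x hx
    simp only [Function.mem_support] at hx
    by_cases hx0 : x = 0
    · subst hx0; simp
    · rw [Function.update_of_ne hx0] at hx
      exact Set.mem_insert_of_mem _ hx
  · intro i hi
    rw [Function.update_of_ne (by omega)]
    exact hz i (by omega)
  · intro i hi
    rcases eq_or_lt_of_le hi with hi0 | hi0
    · rw [← hi0]
      rw [show ((0:ℤ)+1) = 1 by norm_num, Function.update_self,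
        Function.update_of_ne (by norm_num)]
      omega
    · rw [Function.update_of_ne (by omega), Function.update_of_ne (by omega)]
      exact hadj i (by omega)
  · rw [Function.update_self]; exact cN_cast j r l
  · intro i hi
    have : i ≠ 0 := by rintro rfl; exact (Int.not_odd_iff_even.mpr Even.zero) hi
    rw [Function.update_of_ne this]
    exact hodd i hi

lemma key_s15 (j r k n : ℕ) (hjr : j + r ≤ k) :
    Nat.card {f : ℤ → ℕ // f ∈ YoSet j r k ∧ ∑ᶠ i : ℤ, i * (f i : ℤ) = (n : ℤ)}
      = ∑ l ∈ Finset.range (j + 1),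
        Nat.card {g : ℤ → ℕ // g ∈ WbarSet k (k - cN j r l) ∧
          ∑ᶠ i : ℤ, i * (g i : ℤ) = (n : ℤ)} := by
  classical
  have hWfin : ∀ l : ℕ, Finite {g : ℤ → ℕ // g ∈ WbarSet k (k - cN j r l) ∧
      ∑ᶠ i : ℤ, i * (g i : ℤ) = (n : ℤ)} := by
    intro l
    apply finite_slice k n
    rintro g ⟨hfin, hz, hadj, -, -⟩
    refine ⟨hfin, fun i hi => hz i (by omega), fun i => ?_⟩
    rcases lt_or_ge i 1 with hi | hi
    · rw [hz i (by omega)]; omega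
    · have := hadj i hi; omega
  have hf0 : ∀ (f : ℤ → ℕ), f ∈ YoSet j r k →
      invC j r (f 0) ≤ j ∧ f 0 = cN j r (invC j r (f 0)) := by
    intro f hf
    obtain ⟨l, hl, h0⟩ := Yo_f0 hf
    rw [h0, invC_cN]
    exact ⟨hl, rfl⟩
  have E : {f : ℤ → ℕ // f ∈ YoSet j r k ∧ ∑ᶠ i : ℤ, i * (f i : ℤ) = (n : ℤ)}
      ≃ Σ l : Fin (j + 1), {g : ℤ → ℕ // g ∈ WbarSet k (k - cN j r l.1) ∧
        ∑ᶠ i : ℤ, i * (g i : ℤ) = (n : ℤ)} := by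
    refine
      { toFun := fun f => ⟨⟨invC j r (f.1 0), by
          have := (hf0 f.1 f.2.1).1; omega⟩,
          ⟨Function.update f.1 0 0, by
            have h2 := (hf0 f.1 f.2.1).2
            have := mem_Wbar_of f.2.1
            rwa [h2] at this, by rw [wt_update_s15]; exact f.2.2⟩⟩,
        invFun := fun p => ⟨Function.update p.2.1 0 (cN j r p.1.1),
          mem_Yo_of hjr (by omega) p.2.2.1, by rw [wt_update_s15]; exact p.2.2.2⟩,
        left_inv := ?_, right_inv := ?_ }
    · rintro ⟨f, hf, hw⟩
      apply Subtype.ext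
      simp only
      have h2 := (hf0 f hf).2
      funext i
      by_cases hi : i = 0
      · subst hi; rw [Function.update_self, ← h2]
      · rw [Function.update_of_ne hi, Function.update_of_ne hi]
    · rintro ⟨⟨l, hl⟩, g, hg, hw⟩
      apply Sigma.subtype_ext
      · apply Fin.ext
        simp only [Function.update_self]
        exact invC_cN j r l
      · simp only [Function.update_self]
        funext i
        by_cases hi : i = 0
        · subst hi
          rw [Function.update_self, (hg.2.1 0 le_rfl).symm]
        · rw [Function.update_of_ne hi, Function.update_of_ne hi]
  rw [Nat.card_congr E]
  haveI : ∀ l : Fin (j + 1), Fintype {g : ℤ → ℕ // g ∈ WbarSet k (k - cN j r l.1) ∧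
      ∑ᶠ i : ℤ, i * (g i : ℤ) = (n : ℤ)} := fun l => @Fintype.ofFinite _ (hWfin l.1)
  rw [Nat.card_eq_fintype_card, Fintype.card_sigma]
  rw [← Fin.sum_univ_eq_sum_range (fun l => Nat.card {g : ℤ → ℕ //
      g ∈ WbarSet k (k - cN j r l) ∧ ∑ᶠ i : ℤ, i * (g i : ℤ) = (n : ℤ)}) (j + 1)]
  exact Finset.sum_congr rfl fun l _ => (Nat.card_eq_fintype_card).symm

lemma prodSide_swap (k e : ℕ) (he : e ≤ 2*k+4) : prodSide k e = prodSide k (2*k+4-e) := by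
  unfold prodSide
  rw [Nat.sub_sub_self he]
  ring

lemma prodSide_sym (k a b : ℕ) (h : a + b = 2*k+5) :
    prodSide k (2*(a/2)) = prodSide k (2*(b/2)) := by
  have h1 : 2*(b/2) = 2*k+4 - 2*(a/2) := by omega
  rw [h1, ← prodSide_swap k _ (by omega)]

lemma reindex (j r k : ℕ) (hjr : j + r ≤ k) :
    ∑ l ∈ Finset.range (j+1), prodSide k (2*((k - cN j r l + 2)/2))
      = ∑ s ∈ Finset.range (j+1), prodSide k (2*((k+2-r+j-2*s)/2)) := by
  apply Finset.sum_nbij' (tauF j r) (sigF j r)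
  · intro l hl
    simp only [Finset.mem_range] at hl ⊢
    unfold tauF; split_ifs <;> omega
  · intro s hs
    simp only [Finset.mem_range] at hs ⊢
    unfold sigF; split_ifs <;> omega
  · intro l hl
    simp only [Finset.mem_range] at hl
    unfold tauF sigF; split_ifs <;> omega
  · intro s hs
    simp only [Finset.mem_range] at hs
    unfold tauF sigF; split_ifs <;> omega
  · intro l hl
    simp only [Finset.mem_range] at hl
    by_cases h1 : l ≤ j - r
    · by_cases h2 : (j - r - l) % 2 = 1
      · have hs : tauF j r l = (j - r - l - 1) / 2 := by
          unfold tauF; rw [if_pos h1, if_pos h2]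
        rw [hs]
        apply prodSide_sym
        unfold cN; omega
      · have hs : tauF j r l = (l + (j - r)) / 2 := by
          unfold tauF; rw [if_pos h1, if_neg h2]
        rw [hs]
        have he : 2 * ((k - cN j r l + 2) / 2)
            = 2 * ((k + 2 - r + j - 2 * ((l + (j - r)) / 2)) / 2) := by
          unfold cN; omega
        rw [he]
    · have hs : tauF j r l = l := by unfold tauF; rw [if_neg h1]
      rw [hs]
      have he : 2 * ((k - cN j r l + 2) / 2) = 2 * ((k + 2 - r + j - 2 * l) / 2) := by
        unfold cN; omega
      rw [he]

end Aux

/-- Assuming the product formula for the generating functions of the sets `W̄_{k,c}`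
(with exponent `e = 2⌊(c+2)/2⌋`), the generating function of `Y^o_{j,r,k}` equals
`Σ_{s=0}^{j} (-q²;q²)_∞ (q^{2⌊(k+2-r+j-2s)/2⌋}, q^{2k+4-2⌊(k+2-r+j-2s)/2⌋}, q^{2k+4};
q^{2k+4})_∞ / (q²;q²)_∞`. -/
theorem stmt15
    (hyp : ∀ k c : ℕ, c ≤ k → GF (WbarSet k c) = prodSide k (2*((c+2)/2)))
    (j r k : ℕ) (hjr : j + r ≤ k) :
    GF (YoSet j r k)
      = ∑ s ∈ Finset.range (j+1), prodSide k (2*((k+2-r+j-2*s)/2)) := by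
  have main : GF (YoSet j r k)
      = ∑ l ∈ Finset.range (j+1), GF (WbarSet k (k - cN j r l)) := by
    apply PowerSeries.ext
    intro n
    rw [map_sum]
    simp only [GF, PowerSeries.coeff_mk]
    exact_mod_cast key_s15 j r k n hjr
  rw [main,
    Finset.sum_congr rfl (fun l _ => hyp k (k - cN j r l) (Nat.sub_le k _))]
  exact reindex j r k hjr
end

section
/- Let u be an odd integer, and suppose a single particle-motion process ppm_u^{(m)} is applied to a generalised frequency sequence θ with (θ_u, θ_{u+1}) = (h, 0), h > 0, and θ_i + θ_{i+1} ≤ h for all i ≥ u, producing θ'. Then: every even index i has θ_i even and m is even, if and only if every even index i has θ'_i even. -/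
/-- The even member of the pair `{w, w+1}`. -/
def ewIdx (w : ℤ) : ℤ := if Even w then w else w + 1

lemma ewIdx_even (w : ℤ) : Even (ewIdx w) := by
  unfold ewIdx
  split
  · assumption
  · rename_i hw
    rw [Int.even_iff] at *
    omega

/-- The key invariant, by induction on the PPM derivation. -/
lemma ppm_key {s t : (ℤ → ℕ) × ℤ} {m : ℕ} (hp : PPM s m t) :
    ((∀ i : ℤ, Even i → i ≠ ewIdx s.2 → Even (s.1 i)) ∧ Even (s.1 (ewIdx s.2) + m)) ↔
      (∀ i : ℤ, Even i → Even (t.1 i)) := by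
  induction hp with
  | zero f w =>
    simp only
    constructor
    · rintro ⟨hA, hB⟩ i hi
      by_cases hiw : i = ewIdx w
      · subst hiw; simpa using hB
      · exact hA i hi hiw
    · intro hP
      exact ⟨fun i hi _ => hP i hi, by simpa using hP _ (ewIdx_even w)⟩
  | @shift f w m t hm hcond h ih =>
    simp only at ih ⊢
    rw [← ih]
    have hval : f (w + 2) = f w := by omega
    by_cases hw : Even w
    · have e1 : ewIdx w = w := if_pos hw
      have e2 : ewIdx (w + 1) = w + 2 := by
        have : ¬ Even (w + 1) := by rw [Int.even_iff] at *; omega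
        unfold ewIdx
        rw [if_neg this]; ring
      rw [e1, e2]
      constructor
      · rintro ⟨hA, hB⟩
        refine ⟨fun i hi hne => ?_, ?_⟩
        · by_cases hiw : i = w
          · rw [hiw, ← hval]
            exact hA (w + 2) (by rw [Int.even_iff] at *; omega) (by intro hc; omega)
          · exact hA i hi hiw
        · rwa [hval]
      · rintro ⟨hA, hB⟩
        refine ⟨fun i hi hne => ?_, ?_⟩
        · by_cases hiw : i = w + 2
          · rw [hiw, hval]
            exact hA w hw (by intro hc; omega)
          · exact hA i hi hiw
        · rwa [hval] at hB
    · have e1 : ewIdx w = w + 1 := if_neg hw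
      have e2 : ewIdx (w + 1) = w + 1 := if_pos (by rw [Int.even_iff] at *; omega)
      rw [e1, e2]
  | @motion f w m t hcond h ih =>
    simp only at ih ⊢
    rw [← ih]
    set f' := Function.update (Function.update f w (f w - 1)) (w + 1) (f (w + 1) + 1) with hf'
    have hfw1 : 1 ≤ f w := by omega
    have hv1 : f' w = f w - 1 := by
      rw [hf', Function.update_of_ne (by omega), Function.update_self]
    have hv2 : f' (w + 1) = f (w + 1) + 1 := by
      rw [hf', Function.update_self]
    have hv3 : ∀ i : ℤ, i ≠ w → i ≠ w + 1 → f' i = f i := by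
      intro i h1 h2
      rw [hf', Function.update_of_ne h2, Function.update_of_ne h1]
    by_cases hw : Even w
    · have e1 : ewIdx w = w := if_pos hw
      rw [e1]
      have hne : ∀ i : ℤ, Even i → i ≠ w + 1 := by
        intro i hi hc; rw [Int.even_iff] at *; omega
      constructor
      · rintro ⟨hA, hB⟩
        refine ⟨fun i hi hiw => ?_, ?_⟩
        · rw [hv3 i hiw (hne i hi)]; exact hA i hi hiw
        · rw [hv1, Nat.even_iff]; rw [Nat.even_iff] at hB; omega
      · rintro ⟨hA, hB⟩
        refine ⟨fun i hi hiw => ?_, ?_⟩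
        · rw [← hv3 i hiw (hne i hi)]; exact hA i hi hiw
        · rw [hv1, Nat.even_iff] at hB; rw [Nat.even_iff]; omega
    · have e1 : ewIdx w = w + 1 := if_neg hw
      rw [e1]
      have hne : ∀ i : ℤ, Even i → i ≠ w := by
        intro i hi hc; rw [Int.even_iff] at *; omega
      constructor
      · rintro ⟨hA, hB⟩
        refine ⟨fun i hi hiw => ?_, ?_⟩
        · rw [hv3 i (hne i hi) hiw]; exact hA i hi hiw
        · rw [hv2, Nat.even_iff]; rw [Nat.even_iff] at hB; omega
      · rintro ⟨hA, hB⟩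
        refine ⟨fun i hi hiw => ?_, ?_⟩
        · rw [← hv3 i (hne i hi) hiw]; exact hA i hi hiw
        · rw [hv2, Nat.even_iff] at hB; rw [Nat.even_iff]; omega

/-- Parity preservation for particle motion at an odd focus `u`: if
`(θ_u, θ_{u+1}) = (h, 0)` with `h > 0` and `θ_i + θ_{i+1} ≤ h` for `i ≥ u`, and `θ'`
is the result of `ppm_u^{(m)}`, then: every even index carries an even frequency in `θ`
and `m` is even, if and only if every even index carries an even frequency in `θ'`. -/
theorem stmt18 (θ : ℤ → ℕ) (hfin : (Function.support θ).Finite) (u : ℤ) (hu : Odd u)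
    (h m : ℕ) (hh : 0 < h) (h0 : θ u = h) (h1 : θ (u+1) = 0)
    (hbd : ∀ i, u ≤ i → θ i + θ (i+1) ≤ h)
    (θ' : ℤ → ℕ) (v : ℤ) (hppm : PPM (θ, u) m (θ', v)) :
    ((∀ i : ℤ, Even i → Even (θ i)) ∧ Even m) ↔ (∀ i : ℤ, Even i → Even (θ' i)) := by
  have key := ppm_key hppm
  simp only at key
  have hu' : ¬ Even u := Int.not_even_iff_odd.mpr hu
  have e1 : ewIdx u = u + 1 := if_neg hu'
  rw [e1, h1] at key
  rw [← key]
  constructor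
  · rintro ⟨hA, hB⟩
    exact ⟨fun i hi _ => hA i hi, by simpa using hB⟩
  · rintro ⟨hA, hB⟩
    refine ⟨fun i hi => ?_, by simpa using hB⟩
    by_cases hiw : i = u + 1
    · subst hiw; rw [h1]; exact Even.zero
    · exact hA i hi hiw
end

section
/- Let f = (f_i)_{i∈ℤ} be a generalised frequency sequence, u an integer, h ≥ 1 with (f_u, f_{u+1}) = (h,0) and f_i + f_{i+1} ≤ h for all i ≥ u, and let f̄ = ppm_u^{(m)}(f) with final focus at the pair (f̄_v, f̄_{v+1}). Then modulo 2, m ≡ v·f̄_v + (v+1)·f̄_{v+1} + (u)·f_u + (u+1)·f_{u+1} (mod 2); in particular if u is even, then m ≡ v·f̄_v + (v+1)·f̄_{v+1} (mod 2). -/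
lemma ppm_parity {s t : (ℤ → ℕ) × ℤ} {m : ℕ} (hp : PPM s m t) :
    Int.ModEq 2 ((m : ℤ) + s.2 * (s.1 s.2 : ℤ) + (s.2+1) * (s.1 (s.2+1) : ℤ))
      (t.2 * (t.1 t.2 : ℤ) + (t.2+1) * (t.1 (t.2+1) : ℤ)) := by
  induction hp with
  | zero f w => simp [Int.ModEq]
  | @shift f w m t hm hcond h ih =>
      refine Int.ModEq.trans ?_ ih
      simp only at ih ⊢
      have hfw : (f (w+2) : ℤ) = f w := by omega
      rw [Int.modEq_iff_dvd]
      refine ⟨f w, ?_⟩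
      have h2 : (w:ℤ)+1+1 = w+2 := by ring
      rw [h2, hfw]; ring
  | @motion f w m t hcond h ih =>
      refine Int.ModEq.trans ?_ ih
      simp only at ih ⊢
      have h1 : Function.update (Function.update f w (f w - 1)) (w+1) (f (w+1) + 1) w
          = f w - 1 := by
        rw [Function.update_of_ne (by omega), Function.update_self]
      have h2 : Function.update (Function.update f w (f w - 1)) (w+1) (f (w+1) + 1) (w+1)
          = f (w+1) + 1 := by rw [Function.update_self]
      rw [h1, h2]
      have hge : 1 ≤ f w := by omega
      have : (↑(f w - 1) : ℤ) = (f w : ℤ) - 1 := by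
        push_cast [hge]; ring
      rw [this]
      have heq : ((m:ℤ) + 1 + w * (f w : ℤ) + (w + 1) * (f (w + 1) : ℤ))
          = (m:ℤ) + w * ((f w : ℤ) - 1) + (w + 1) * ((f (w + 1) : ℤ) + 1) := by ring
      push_cast
      rw [heq]

/-- Parity of the number of particle motions: if `fbar = ppm_u^{(m)}(f)` with final focus
at `(fbar_v, fbar_{v+1})`, then
`m ≡ v·fbar_v + (v+1)·fbar_{v+1} + u·f_u + (u+1)·f_{u+1} (mod 2)`; in particular,
if `u` is even then `m ≡ v·fbar_v + (v+1)·fbar_{v+1} (mod 2)`. -/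
theorem stmt19 (f : ℤ → ℕ) (hfin : (Function.support f).Finite) (u : ℤ)
    (h m : ℕ) (hh : 1 ≤ h) (hfu : f u = h) (hfu1 : f (u+1) = 0)
    (hbd : ∀ i, u ≤ i → f i + f (i+1) ≤ h)
    (fbar : ℤ → ℕ) (v : ℤ) (hppm : PPM (f, u) m (fbar, v)) :
    Int.ModEq 2 (m : ℤ)
      (v * (fbar v : ℤ) + (v+1) * (fbar (v+1) : ℤ)
        + u * (f u : ℤ) + (u+1) * (f (u+1) : ℤ)) ∧
    (Even u → Int.ModEq 2 (m : ℤ) (v * (fbar v : ℤ) + (v+1) * (fbar (v+1) : ℤ))) := by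
  have hp := ppm_parity hppm
  simp only at hp
  obtain ⟨k, hk⟩ := Int.modEq_iff_dvd.mp hp
  constructor
  · rw [Int.modEq_iff_dvd]
    exact ⟨k + u * (f u : ℤ) + (u+1) * (f (u+1) : ℤ), by linarith⟩
  · intro hu
    obtain ⟨j, hj⟩ := hu
    rw [Int.modEq_iff_dvd]
    refine ⟨k + j * (f u : ℤ), ?_⟩
    have hB : ((f (u+1) : ℤ)) = 0 := by rw [hfu1]; simp
    rw [hB] at hk
    subst hj
    have h2 : (j+j) * (f (j+j) : ℤ) = 2 * (j * (f (j+j) : ℤ)) := by ring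
    linarith
end
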